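/- arXiv:2409.00612 — 6 statements merged into one kernel-verified Lean document; each statement's English description precedes it below -/
import Mathlib

section
/- In a flag simplicial complex, if a dwheel W is contained in the closed 1-ball B_1(v) around a vertex v and both wheels of W are full subcomplexes, then either W is contained in the link of v, or v is a vertex of W and one of the wheels of W fails to be full. Consequently, in the definition of m-location one may equivalently require only containment in a 1-ball. -/
/-- A flag simplicial complex is determined by its 1-skeleton graph `G`.
A `k`-wheel `(c; r 0, …, r (k-1))`: `r` is an (injective) cycle and `c` is adjacent
to every rim vertex. -/
def IsWheel {V : Type*} (G : SimpleGraph V) {k : ℕ} (c : V) (r : ZMod k → V) : Prop :=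
  Function.Injective r ∧ (∀ i, c ≠ r i) ∧ (∀ i, G.Adj (r i) (r (i + 1))) ∧ (∀ i, G.Adj c (r i))

/-- A wheel that is a full (induced) subcomplex: the only adjacencies among rim
vertices are the consecutive ones. -/
def IsFullWheel {V : Type*} (G : SimpleGraph V) {k : ℕ} (c : V) (r : ZMod k → V) : Prop :=
  IsWheel G c r ∧ ∀ i j, G.Adj (r i) (r j) → j = i + 1 ∨ i = j + 1

/-- `5`-largeness: no induced (full) `4`-cycle. -/
def FiveLarge {V : Type*} (G : SimpleGraph V) : Prop :=
  ∀ a b c d : V, a ≠ c → b ≠ d → G.Adj a b → G.Adj b c → G.Adj c d → G.Adj d a →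
    G.Adj a c ∨ G.Adj b d

/-- Local `5`-largeness: no vertex link contains an induced `4`-cycle. -/
def LocallyFiveLarge {V : Type*} (G : SimpleGraph V) : Prop :=
  ∀ z a b c d : V, G.Adj z a → G.Adj z b → G.Adj z c → G.Adj z d →
    a ≠ c → b ≠ d → G.Adj a b → G.Adj b c → G.Adj c d → G.Adj d a →
    G.Adj a c ∨ G.Adj b d

/-- The extended `5`-wheel condition: every extended `5`-wheel `(c; r; a)` is
contained in the link of some vertex `z`. -/
def ExtFiveWheelCond {V : Type*} (G : SimpleGraph V) : Prop :=
  ∀ (c a : V) (r : ZMod 5 → V), IsWheel G c r →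
    G.Adj a (r 0) → G.Adj a (r 1) → a ≠ c → ¬ G.Adj a c →
    (∀ i : ZMod 5, i ≠ 0 → i ≠ 1 → a ≠ r i ∧ ¬ G.Adj a (r i)) →
    ∃ z : V, G.Adj z c ∧ G.Adj z a ∧ ∀ i, G.Adj z (r i)

/-- `m`-location.  A `(k,l)`-dwheel is the union of wheels
`W₁ = (w l; v 0, …, v (k-1))` and `W₂ = (v 1; w 0, …, w (l-1))` with
`v 2 = w (l-2)` (shared rim vertex) and either `v 0 = w 0` (planar, boundary
length `k+l-4`) or `v 0 ~ w 0` (nonplanar, boundary length `k+l-3`).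
Here the center of `W₁` is `w (-1)` and the center of `W₂` is `v 1`.
If both wheels are full and the boundary length is at most `m`, the dwheel is
contained in the link of some vertex. -/
def MLocated {V : Type*} (G : SimpleGraph V) (m : ℕ) : Prop :=
  ∀ (k l : ℕ), 4 ≤ k → 4 ≤ l → ∀ (v : ZMod k → V) (w : ZMod l → V),
    IsFullWheel G (w (-1)) v → IsFullWheel G (v 1) w → v 2 = w (-2) →
    ((v 0 = w 0 ∧ k + l - 4 ≤ m) ∨ (v 0 ≠ w 0 ∧ G.Adj (v 0) (w 0) ∧ k + l - 3 ≤ m)) →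
    ∃ z : V, (∀ i, G.Adj z (v i)) ∧ (∀ i, G.Adj z (w i))


private lemma natCast_ne_zero_zmod {k n : ℕ} (hk : 4 ≤ k) (hn : 0 < n) (hn4 : n < 4) :
    ((n : ℕ) : ZMod k) ≠ 0 := by
  haveI : NeZero k := ⟨by omega⟩
  intro h
  rw [ZMod.natCast_eq_zero_iff] at h
  replace h := h
  have := Nat.le_of_dvd hn h
  omega

private lemma not_center_on_rim {V : Type*} (G : SimpleGraph V) {k : ℕ} (hk : 4 ≤ k)
    {c : V} {r : ZMod k → V} (hF : IsFullWheel G c r) {z : V}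
    (hb : ∀ j, z = r j ∨ G.Adj z (r j)) {i : ZMod k} (hz : z = r i) : False := by
  obtain ⟨⟨hinj, -, -, -⟩, hfull⟩ := hF
  rcases hb (i + 2) with h | h
  · have h2 : i = i + 2 := hinj (hz ▸ h)
    have : ((2 : ℕ) : ZMod k) = 0 := by
      have := left_eq_add.mp h2
      simpa using this
    exact natCast_ne_zero_zmod hk (by norm_num) (by norm_num) this
  · have := hfull i (i + 2) (hz ▸ h)
    rcases this with h' | h'
    · have : ((1 : ℕ) : ZMod k) = 0 := by
        have : (2 : ZMod k) = 1 := add_left_cancel h'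
        have h1 : (1 : ZMod k) = 0 := by linear_combination this
        simpa using h1
      exact natCast_ne_zero_zmod hk (by norm_num) (by norm_num) this
    · have : ((3 : ℕ) : ZMod k) = 0 := by
        have := left_eq_add.mp (by linear_combination h' : i = i + 3)
        simpa using this
      exact natCast_ne_zero_zmod hk (by norm_num) (by norm_num) this

/-- If a dwheel `W` (with both wheels full) is contained in the closed
1-ball around a vertex `z`, then either `W` is contained in the link of `z`, or `z`
is a vertex of `W` and one of the wheels of `W` fails to be full. -/
theorem dwheel_in_ball_iff_link {V : Type*} (G : SimpleGraph V)
    (k l : ℕ) (hk : 4 ≤ k) (hl : 4 ≤ l) (v : ZMod k → V) (w : ZMod l → V)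
    (hW1 : IsFullWheel G (w (-1)) v) (hW2 : IsFullWheel G (v 1) w)
    (hshare : v 2 = w (-2))
    (hconn : v 0 = w 0 ∨ (v 0 ≠ w 0 ∧ G.Adj (v 0) (w 0)))
    (z : V)
    (hball : (∀ i, z = v i ∨ G.Adj z (v i)) ∧ (∀ i, z = w i ∨ G.Adj z (w i))) :
    ((∀ i, G.Adj z (v i)) ∧ (∀ i, G.Adj z (w i))) ∨
      (((∃ i, z = v i) ∨ (∃ i, z = w i)) ∧
        (¬ IsFullWheel G (w (-1)) v ∨ ¬ IsFullWheel G (v 1) w)) := by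
  left
  constructor
  · intro i
    rcases hball.1 i with h | h
    · exact absurd h (fun h => not_center_on_rim G hk hW1 hball.1 h)
    · exact h
  · intro i
    rcases hball.2 i with h | h
    · exact absurd h (fun h => not_center_on_rim G hl hW2 hball.2 h)
    · exact h
end

section
/- Let X be a 5-large flag simplicial complex satisfying the extended-5-wheel condition (locally weakly systolic). If W = W_1 ∪ W_2 is a planar (5,5)-dwheel in X with both wheels W_1 and W_2 full subcomplexes, then W is contained in the 1-ball centered at some vertex of X. -/
/-- In a 5-large flag complex satisfying the extended-5-wheel condition,
every planar (5,5)-dwheel with full wheels lies in a 1-ball. -/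
theorem planar_five_five_dwheel_in_ball {V : Type*} (G : SimpleGraph V)
    (h5 : FiveLarge G) (hext : ExtFiveWheelCond G)
    (v w : ZMod 5 → V)
    (hW1 : IsFullWheel G (w (-1)) v) (hW2 : IsFullWheel G (v 1) w)
    (hshare : v 2 = w (-2)) (hplanar : v 0 = w 0) :
    ∃ z : V, (∀ i, z = v i ∨ G.Adj z (v i)) ∧ (∀ i, z = w i ∨ G.Adj z (w i)) := by
  obtain ⟨⟨hvinj, hvc, hvadj, hcadj⟩, hvfull⟩ := hW1
  obtain ⟨⟨hwinj, hwc, hwadj, hc2adj⟩, hwfull⟩ := hW2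
  have h41 : (-1 : ZMod 5) = 4 := by decide
  have h32 : (-2 : ZMod 5) = 3 := by decide
  rw [h32] at hshare
  -- basic adjacency facts
  have hw1v0 : G.Adj (w 1) (v 0) := by rw [hplanar]; exact (hwadj 0).symm
  have hw1v1 : G.Adj (w 1) (v 1) := (hc2adj 1).symm
  have hw1w4 : ¬ G.Adj (w 1) (w 4) := by
    intro h; rcases hwfull 1 4 h with h' | h' <;> exact absurd h' (by decide)
  have hw1w3 : ¬ G.Adj (w 1) (w 3) := by
    intro h; rcases hwfull 1 3 h with h' | h' <;> exact absurd h' (by decide)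
  have hv1v3 : ¬ G.Adj (v 1) (v 3) := by
    intro h; rcases hvfull 1 3 h with h' | h' <;> exact absurd h' (by decide)
  have hv1v4 : ¬ G.Adj (v 1) (v 4) := by
    intro h; rcases hvfull 1 4 h with h' | h' <;> exact absurd h' (by decide)
  have hcadj4 : ∀ i, G.Adj (w 4) (v i) := by rw [← h41]; exact hcadj
  -- apply extended 5-wheel condition with c = w (-1), a = w 1, r = v
  have hane : w 1 ≠ w (-1) := by rw [h41]; exact fun h => absurd (hwinj h) (by decide)
  have hanadj : ¬ G.Adj (w 1) (w (-1)) := by rw [h41]; exact hw1w4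
  have hrest : ∀ i : ZMod 5, i ≠ 0 → i ≠ 1 → w 1 ≠ v i ∧ ¬ G.Adj (w 1) (v i) := by
    intro i hi0 hi1
    have hi : i = 2 ∨ i = 3 ∨ i = 4 := by revert hi0 hi1; revert i; decide
    rcases hi with rfl | rfl | rfl
    · rw [hshare]
      exact ⟨fun h => absurd (hwinj h) (by decide), hw1w3⟩
    · constructor
      · intro h
        rw [h] at hw1v1
        rcases hvfull 1 3 hw1v1.symm with h' | h' <;> exact absurd h' (by decide)
      · intro h
        rcases h5 (v 1) (w 1) (v 3) (w 4) (fun h' => absurd (hvinj h') (by decide))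
          (fun h' => absurd (hwinj h') (by decide)) hw1v1.symm h (hcadj4 3).symm
          (hcadj4 1) with h' | h'
        · exact hv1v3 h'
        · exact hw1w4 h'
    · constructor
      · intro h
        rw [h] at hw1v1
        rcases hvfull 1 4 hw1v1.symm with h' | h' <;> exact absurd h' (by decide)
      · intro h
        rcases h5 (v 1) (w 1) (v 4) (w 4) (fun h' => absurd (hvinj h') (by decide))
          (fun h' => absurd (hwinj h') (by decide)) hw1v1.symm h (hcadj4 4).symm
          (hcadj4 1) with h' | h'
        · exact hv1v4 h'
        · exact hw1w4 h'
  obtain ⟨z, hzc, hza, hzv⟩ := hext (w (-1)) (w 1) v ⟨hvinj, hvc, hvadj, hcadj⟩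
    hw1v0 hw1v1 hane hanadj hrest
  rw [h41] at hzc
  -- z is adjacent to w 0, w 1, w 3, w 4 already
  have hzw0 : G.Adj z (w 0) := by rw [← hplanar]; exact hzv 0
  have hzw3 : G.Adj z (w 3) := by rw [← hshare]; exact hzv 2
  -- deal with w 2
  have hzw2 : z = w 2 ∨ G.Adj z (w 2) := by
    by_cases h : z = w 2
    · exact Or.inl h
    · rcases h5 z (w 1) (w 2) (w 3) h (fun h' => absurd (hwinj h') (by decide))
        hza (hwadj 1) (hwadj 2) hzw3.symm with h' | h'
      · exact Or.inr h'
      · exact absurd h' hw1w3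
  refine ⟨z, fun i => Or.inr (hzv i), fun i => ?_⟩
  have hi : i = 0 ∨ i = 1 ∨ i = 2 ∨ i = 3 ∨ i = 4 := by revert i; decide
  rcases hi with rfl | rfl | rfl | rfl | rfl
  · exact Or.inr hzw0
  · exact Or.inr hza
  · exact hzw2
  · exact Or.inr hzw3
  · exact Or.inr hzc
end

section
/- Let X be a 5-large flag simplicial complex satisfying the extended-5-wheel condition. If W = W_1 ∪ W_2 is a nonplanar (5,5)-dwheel in X (i.e., v_1 ~ w_1 rather than v_1 = w_1) with both wheels full subcomplexes, then W is contained in the 1-ball centered at some vertex of X. -/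
/-- In a 5-large flag complex satisfying the extended-5-wheel condition,
every nonplanar (5,5)-dwheel with full wheels lies in a 1-ball. -/
theorem nonplanar_five_five_dwheel_in_ball {V : Type*} (G : SimpleGraph V)
    (h5 : FiveLarge G) (hext : ExtFiveWheelCond G)
    (v w : ZMod 5 → V)
    (hW1 : IsFullWheel G (w (-1)) v) (hW2 : IsFullWheel G (v 1) w)
    (hshare : v 2 = w (-2)) (hne : v 0 ≠ w 0) (hadj : G.Adj (v 0) (w 0)) :
    ∃ z : V, (∀ i, z = v i ∨ G.Adj z (v i)) ∧ (∀ i, z = w i ∨ G.Adj z (w i)) := by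
  have e1 : (-1 : ZMod 5) = 4 := by decide
  have e2 : (-2 : ZMod 5) = 3 := by decide
  rw [e1] at hW1
  rw [e2] at hshare
  obtain ⟨⟨hvinj, hvc, hvcyc, hvadj⟩, hvfull⟩ := hW1
  obtain ⟨⟨hwinj, hwc, hwcyc, hwadj⟩, hwfull⟩ := hW2
  -- non-adjacency from fullness
  have nv : ∀ i j : ZMod 5, j ≠ i + 1 → i ≠ j + 1 → ¬ G.Adj (v i) (v j) := by
    intro i j h1 h2 h
    rcases hvfull i j h with h' | h'
    · exact h1 h'
    · exact h2 h'
  have nw : ∀ i j : ZMod 5, j ≠ i + 1 → i ≠ j + 1 → ¬ G.Adj (w i) (w j) := by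
    intro i j h1 h2 h
    rcases hwfull i j h with h' | h'
    · exact h1 h'
    · exact h2 h'
  have vne : ∀ i j : ZMod 5, i ≠ j → v i ≠ v j := fun i j hij h => hij (hvinj h)
  have wne : ∀ i j : ZMod 5, i ≠ j → w i ≠ w j := fun i j hij h => hij (hwinj h)
  -- rim edges with clean indices
  have av01 : G.Adj (v 0) (v 1) := by
    have h := hvcyc 0; rwa [show (0 + 1 : ZMod 5) = 1 from by decide] at h
  have av12 : G.Adj (v 1) (v 2) := by
    have h := hvcyc 1; rwa [show (1 + 1 : ZMod 5) = 2 from by decide] at h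
  have av23 : G.Adj (v 2) (v 3) := by
    have h := hvcyc 2; rwa [show (2 + 1 : ZMod 5) = 3 from by decide] at h
  have av34 : G.Adj (v 3) (v 4) := by
    have h := hvcyc 3; rwa [show (3 + 1 : ZMod 5) = 4 from by decide] at h
  have av40 : G.Adj (v 4) (v 0) := by
    have h := hvcyc 4; rwa [show (4 + 1 : ZMod 5) = 0 from by decide] at h
  have aw01 : G.Adj (w 0) (w 1) := by
    have h := hwcyc 0; rwa [show (0 + 1 : ZMod 5) = 1 from by decide] at h
  have aw12 : G.Adj (w 1) (w 2) := by
    have h := hwcyc 1; rwa [show (1 + 1 : ZMod 5) = 2 from by decide] at h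
  have aw23 : G.Adj (w 2) (w 3) := by
    have h := hwcyc 2; rwa [show (2 + 1 : ZMod 5) = 3 from by decide] at h
  have aw34 : G.Adj (w 3) (w 4) := by
    have h := hwcyc 3; rwa [show (3 + 1 : ZMod 5) = 4 from by decide] at h
  -- cross adjacencies
  have hw2v2 : G.Adj (w 2) (v 2) := by rw [hshare]; exact aw23
  have hv3w3 : G.Adj (v 3) (w 3) := by rw [← hshare]; exact av23.symm
  -- inequalities and non-adjacencies for the first extended wheel (a = w 2)
  have ne_w2_v3 : w 2 ≠ v 3 := by
    intro h
    have h2 : G.Adj (w 2) (w 4) := by rw [h]; exact (hvadj 3).symm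
    exact nw 2 4 (by decide) (by decide) h2
  have ne_w2_v4 : w 2 ≠ v 4 := by
    intro h
    have h2 : G.Adj (w 2) (w 4) := by rw [h]; exact (hvadj 4).symm
    exact nw 2 4 (by decide) (by decide) h2
  have ne_w2_v0 : w 2 ≠ v 0 := by
    intro h
    have h2 : G.Adj (w 2) (w 0) := by rw [h]; exact hadj
    exact nw 2 0 (by decide) (by decide) h2
  have na_w2_v3 : ¬ G.Adj (w 2) (v 3) := by
    intro h
    rcases h5 (v 1) (w 2) (v 3) (w 4) (vne 1 3 (by decide)) (wne 2 4 (by decide))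
      (hwadj 2) h ((hvadj 3).symm) (hvadj 1) with h' | h'
    · exact nv 1 3 (by decide) (by decide) h'
    · exact nw 2 4 (by decide) (by decide) h'
  have na_w2_v4 : ¬ G.Adj (w 2) (v 4) := by
    intro h
    have hne' : v 4 ≠ w 3 := by rw [← hshare]; exact vne 4 2 (by decide)
    rcases h5 (w 2) (v 4) (w 4) (w 3) (wne 2 4 (by decide)) hne'
      h ((hvadj 4).symm) (aw34.symm) (aw23.symm) with h' | h'
    · exact nw 2 4 (by decide) (by decide) h'
    · rw [← hshare] at h'
      exact nv 4 2 (by decide) (by decide) h'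
  have na_w2_v0 : ¬ G.Adj (w 2) (v 0) := by
    intro h
    have hne' : v 0 ≠ w 3 := by rw [← hshare]; exact vne 0 2 (by decide)
    rcases h5 (v 0) (w 2) (w 3) (w 4) hne' (wne 2 4 (by decide))
      h.symm aw23 aw34 (hvadj 0) with h' | h'
    · rw [← hshare] at h'
      exact nv 0 2 (by decide) (by decide) h'
    · exact nw 2 4 (by decide) (by decide) h'
  -- inequalities and non-adjacencies for the second extended wheel (a = v 3)
  have ne_v3_w0 : v 3 ≠ w 0 := by
    intro h
    have h2 : G.Adj (v 0) (v 3) := by rw [h]; exact hadj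
    exact nv 0 3 (by decide) (by decide) h2
  have ne_v3_w1 : v 3 ≠ w 1 := by
    intro h
    have h2 : G.Adj (w 1) (w 4) := by rw [← h]; exact (hvadj 3).symm
    exact nw 1 4 (by decide) (by decide) h2
  have na_v3_w0 : ¬ G.Adj (v 3) (w 0) := by
    intro h
    have hne' : w 0 ≠ v 2 := by rw [hshare]; exact wne 0 3 (by decide)
    rcases h5 (v 3) (w 0) (v 1) (v 2) (vne 3 1 (by decide)) hne'
      h ((hwadj 0).symm) av12 av23 with h' | h'
    · exact nv 3 1 (by decide) (by decide) h'
    · rw [hshare] at h'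
      exact nw 0 3 (by decide) (by decide) h'
  have na_v3_w1 : ¬ G.Adj (v 3) (w 1) := by
    intro h
    rcases h5 (v 3) (w 1) (w 2) (w 3) (fun hh => ne_w2_v3 hh.symm)
      (wne 1 3 (by decide)) h aw12 aw23 (hv3w3.symm) with h' | h'
    · exact na_w2_v3 h'.symm
    · exact nw 1 3 (by decide) (by decide) h'
  -- the first extended 5-wheel: center w 4, rim i ↦ v (i+1), extra vertex w 2
  have hwheel1 : IsWheel G (w 4) (fun i => v (i + 1)) := by
    refine ⟨?_, ?_, ?_, ?_⟩
    · intro a b h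
      exact add_right_cancel (hvinj h)
    · intro i; exact hvc (i + 1)
    · intro i; exact hvcyc (i + 1)
    · intro i; exact hvadj (i + 1)
  have hi245 : ∀ j : ZMod 5, j ≠ 0 → j ≠ 1 → j = 2 ∨ j = 3 ∨ j = 4 := by decide
  obtain ⟨z, hzw4, hzw2, hzr⟩ := hext (w 4) (w 2) (fun i => v (i + 1)) hwheel1
    (by show G.Adj (w 2) (v (0 + 1))
        rw [show (0 + 1 : ZMod 5) = 1 from by decide]; exact (hwadj 2).symm)
    (by show G.Adj (w 2) (v (1 + 1))
        rw [show (1 + 1 : ZMod 5) = 2 from by decide]; exact hw2v2)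
    (wne 2 4 (by decide))
    (nw 2 4 (by decide) (by decide))
    (by
      intro i h0 h1
      rcases hi245 i h0 h1 with rfl | rfl | rfl
      · show w 2 ≠ v (2 + 1) ∧ ¬ G.Adj (w 2) (v (2 + 1))
        rw [show (2 + 1 : ZMod 5) = 3 from by decide]
        exact ⟨ne_w2_v3, na_w2_v3⟩
      · show w 2 ≠ v (3 + 1) ∧ ¬ G.Adj (w 2) (v (3 + 1))
        rw [show (3 + 1 : ZMod 5) = 4 from by decide]
        exact ⟨ne_w2_v4, na_w2_v4⟩
      · show w 2 ≠ v (4 + 1) ∧ ¬ G.Adj (w 2) (v (4 + 1))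
        rw [show (4 + 1 : ZMod 5) = 0 from by decide]
        exact ⟨ne_w2_v0, na_w2_v0⟩)
  have hzv : ∀ j, G.Adj z (v j) := by
    intro j
    have h := hzr (j - 1)
    have hj : j - 1 + 1 = j := by ring
    simpa [hj] using h
  -- the second extended 5-wheel: center v 1, rim i ↦ w (i+3), extra vertex v 3
  have hwheel2 : IsWheel G (v 1) (fun i => w (i + 3)) := by
    refine ⟨?_, ?_, ?_, ?_⟩
    · intro a b h
      exact add_right_cancel (hwinj h)
    · intro i; exact hwc (i + 3)
    · intro i
      have h := hwcyc (i + 3)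
      have hj : i + 3 + 1 = i + 1 + 3 := by ring
      rwa [hj] at h
    · intro i; exact hwadj (i + 3)
  obtain ⟨z', hz'v1, hz'v3, hz'r⟩ := hext (v 1) (v 3) (fun i => w (i + 3)) hwheel2
    (by show G.Adj (v 3) (w (0 + 3))
        rw [show (0 + 3 : ZMod 5) = 3 from by decide]; exact hv3w3)
    (by show G.Adj (v 3) (w (1 + 3))
        rw [show (1 + 3 : ZMod 5) = 4 from by decide]; exact (hvadj 3).symm)
    (vne 3 1 (by decide))
    (nv 3 1 (by decide) (by decide))
    (by
      intro i h0 h1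
      rcases hi245 i h0 h1 with rfl | rfl | rfl
      · show v 3 ≠ w (2 + 3) ∧ ¬ G.Adj (v 3) (w (2 + 3))
        rw [show (2 + 3 : ZMod 5) = 0 from by decide]
        exact ⟨ne_v3_w0, na_v3_w0⟩
      · show v 3 ≠ w (3 + 3) ∧ ¬ G.Adj (v 3) (w (3 + 3))
        rw [show (3 + 3 : ZMod 5) = 1 from by decide]
        exact ⟨ne_v3_w1, na_v3_w1⟩
      · show v 3 ≠ w (4 + 3) ∧ ¬ G.Adj (v 3) (w (4 + 3))
        rw [show (4 + 3 : ZMod 5) = 2 from by decide]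
        exact ⟨fun h => ne_w2_v3 h.symm, fun h => na_w2_v3 h.symm⟩)
  have hz'w : ∀ j, G.Adj z' (w j) := by
    intro j
    have h := hz'r (j - 3)
    have hj : j - 3 + 3 = j := by ring
    simpa [hj] using h
  have hz'v2 : G.Adj z' (v 2) := by rw [hshare]; exact hz'w 3
  have hiall : ∀ j : ZMod 5, j = 0 ∨ j = 1 ∨ j = 2 ∨ j = 3 ∨ j = 4 := by decide
  -- key ne facts about z and z'
  have ne_z_w0 : z ≠ w 0 := by
    intro h
    exact nw 0 2 (by decide) (by decide) (by rw [← h]; exact hzw2)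
  have ne_z_w1 : z ≠ w 1 := by
    intro h
    exact nw 1 4 (by decide) (by decide) (by rw [← h]; exact hzw4)
  have ne_z'_v0 : z' ≠ v 0 := by
    intro h
    exact nv 0 2 (by decide) (by decide) (by rw [← h]; exact hz'v2)
  have ne_z'_v4 : z' ≠ v 4 := by
    intro h
    exact nv 4 1 (by decide) (by decide) (by rw [← h]; exact hz'v1)
  -- from z ~ w 0 conclude z works
  have zdone : G.Adj z (w 0) → ∃ z : V, (∀ i, z = v i ∨ G.Adj z (v i)) ∧
      (∀ i, z = w i ∨ G.Adj z (w i)) := by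
    intro hzw0
    have hzw1 : G.Adj z (w 1) := by
      rcases h5 z (w 0) (w 1) (w 2) ne_z_w1 (wne 0 2 (by decide))
        hzw0 aw01 aw12 (hzw2.symm) with h' | h'
      · exact h'
      · exact absurd h' (nw 0 2 (by decide) (by decide))
    refine ⟨z, fun i => Or.inr (hzv i), fun i => Or.inr ?_⟩
    rcases hiall i with rfl | rfl | rfl | rfl | rfl
    · exact hzw0
    · exact hzw1
    · exact hzw2
    · rw [← hshare]; exact hzv 2
    · exact hzw4
  -- from z' ~ v 0 conclude z' works
  have z'done : G.Adj z' (v 0) → ∃ z : V, (∀ i, z = v i ∨ G.Adj z (v i)) ∧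
      (∀ i, z = w i ∨ G.Adj z (w i)) := by
    intro hz'v0
    have hz'v4 : G.Adj z' (v 4) := by
      rcases h5 z' (v 0) (v 4) (v 3) ne_z'_v4 (vne 0 3 (by decide))
        hz'v0 (av40.symm) (av34.symm) (hz'v3.symm) with h' | h'
      · exact h'
      · exact absurd h' (nv 0 3 (by decide) (by decide))
    refine ⟨z', fun i => Or.inr ?_, fun i => Or.inr (hz'w i)⟩
    rcases hiall i with rfl | rfl | rfl | rfl | rfl
    · exact hz'v0
    · exact hz'v1
    · exact hz'v2
    · exact hz'v3
    · exact hz'v4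
  by_cases hzz : z = z'
  · exact zdone (hzz ▸ hz'w 0)
  · have hadj_zz : G.Adj z z' := by
      rcases h5 z (v 1) z' (v 3) hzz (vne 1 3 (by decide))
        (hzv 1) (hz'v1.symm) hz'v3 ((hzv 3).symm) with h' | h'
      · exact h'
      · exact absurd h' (nv 1 3 (by decide) (by decide))
    by_cases hz'v0 : G.Adj z' (v 0)
    · exact z'done hz'v0
    · apply zdone
      rcases h5 z z' (w 0) (v 0) ne_z_w0 ne_z'_v0
        hadj_zz (hz'w 0) (hadj.symm) ((hzv 0).symm) with h' | h'
      · exact h'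
      · exact absurd h' hz'v0
end

section
/- Let X be a 5-large flag simplicial complex satisfying the extended-5-wheel condition. If W = W_1 ∪ W_2 is a planar (5,6)-dwheel in X with both wheels full subcomplexes, then W is contained in the 1-ball centered at some vertex of X. -/
/-- In a 5-large flag complex satisfying the extended-5-wheel condition,
every planar (5,6)-dwheel with full wheels lies in a 1-ball. -/
theorem planar_five_six_dwheel_in_ball {V : Type*} (G : SimpleGraph V)
    (h5 : FiveLarge G) (hext : ExtFiveWheelCond G)
    (v : ZMod 5 → V) (w : ZMod 6 → V)
    (hW1 : IsFullWheel G (w (-1)) v) (hW2 : IsFullWheel G (v 1) w)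
    (hshare : v 2 = w (-2)) (hplanar : v 0 = w 0) :
    ∃ z : V, (∀ i, z = v i ∨ G.Adj z (v i)) ∧ (∀ i, z = w i ∨ G.Adj z (w i)) := by
  
  rw [show ((-1 : ZMod 6)) = 5 from by decide] at hW1
  rw [show ((-2 : ZMod 6)) = 4 from by decide] at hshare
  have h5cases : ∀ i : ZMod 5, i = 0 ∨ i = 1 ∨ i = 2 ∨ i = 3 ∨ i = 4 := by decide
  have h6cases : ∀ j : ZMod 6, j = 0 ∨ j = 1 ∨ j = 2 ∨ j = 3 ∨ j = 4 ∨ j = 5 := by decide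
  have h2345 : ∀ i : ZMod 5, i ≠ 0 → i ≠ 1 → i = 2 ∨ i = 3 ∨ i = 4 := by decide
  obtain ⟨⟨hvinj, hcvne, hvadj, hcvadj⟩, hvfull⟩ := hW1
  obtain ⟨⟨hwinj, hv1wne, hwadj, hv1wadj⟩, hwfull⟩ := hW2
  have hvnon : ∀ i j : ZMod 5, j ≠ i + 1 → i ≠ j + 1 → ¬ G.Adj (v i) (v j) :=
    fun i j h1 h2 h => ((hvfull i j h).elim h1 h2)
  have hwnon : ∀ i j : ZMod 6, j ≠ i + 1 → i ≠ j + 1 → ¬ G.Adj (w i) (w j) :=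
    fun i j h1 h2 h => ((hwfull i j h).elim h1 h2)
  have hvne : ∀ i j : ZMod 5, i ≠ j → v i ≠ v j := fun i j h he => h (hvinj he)
  have hwne : ∀ i j : ZMod 6, i ≠ j → w i ≠ w j := fun i j h he => h (hwinj he)
  -- rim edges with normalized indices
  have hv01 : G.Adj (v 0) (v 1) := by have := hvadj 0; rwa [show ((0:ZMod 5)+1) = 1 from by decide] at this
  have hv12 : G.Adj (v 1) (v 2) := by have := hvadj 1; rwa [show ((1:ZMod 5)+1) = 2 from by decide] at this
  have hv23 : G.Adj (v 2) (v 3) := by have := hvadj 2; rwa [show ((2:ZMod 5)+1) = 3 from by decide] at this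
  have hv34 : G.Adj (v 3) (v 4) := by have := hvadj 3; rwa [show ((3:ZMod 5)+1) = 4 from by decide] at this
  have hv40 : G.Adj (v 4) (v 0) := by have := hvadj 4; rwa [show ((4:ZMod 5)+1) = 0 from by decide] at this
  have hw01 : G.Adj (w 0) (w 1) := by have := hwadj 0; rwa [show ((0:ZMod 6)+1) = 1 from by decide] at this
  have hw12 : G.Adj (w 1) (w 2) := by have := hwadj 1; rwa [show ((1:ZMod 6)+1) = 2 from by decide] at this
  have hw23 : G.Adj (w 2) (w 3) := by have := hwadj 2; rwa [show ((2:ZMod 6)+1) = 3 from by decide] at this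
  have hw34 : G.Adj (w 3) (w 4) := by have := hwadj 3; rwa [show ((3:ZMod 6)+1) = 4 from by decide] at this
  have hw50 : G.Adj (w 5) (w 0) := by have := hwadj 5; rwa [show ((5:ZMod 6)+1) = 0 from by decide] at this
  -- non-adjacencies
  have hnw15 : ¬ G.Adj (w 1) (w 5) := hwnon 1 5 (by decide) (by decide)
  have hnw25 : ¬ G.Adj (w 2) (w 5) := hwnon 2 5 (by decide) (by decide)
  have hnw35 : ¬ G.Adj (w 3) (w 5) := hwnon 3 5 (by decide) (by decide)
  have hnw14 : ¬ G.Adj (w 1) (w 4) := hwnon 1 4 (by decide) (by decide)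
  have hnw31 : ¬ G.Adj (w 3) (w 1) := hwnon 3 1 (by decide) (by decide)
  have hnw51 : ¬ G.Adj (w 5) (w 1) := hwnon 5 1 (by decide) (by decide)
  have hnv13 : ¬ G.Adj (v 1) (v 3) := hvnon 1 3 (by decide) (by decide)
  have hnv14 : ¬ G.Adj (v 1) (v 4) := hvnon 1 4 (by decide) (by decide)
  have hnv03 : ¬ G.Adj (v 0) (v 3) := hvnon 0 3 (by decide) (by decide)
  have hnv31 : ¬ G.Adj (v 3) (v 1) := hvnon 3 1 (by decide) (by decide)
  -- Step 2: no adjacency/equality between v i (i = 3,4) and w j (j = 1,2,3)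
  have step2 : ∀ (i : ZMod 5) (j : ZMod 6), i ≠ 1 → j ≠ 5 → ¬ G.Adj (v 1) (v i) →
      ¬ G.Adj (w j) (w 5) → v i ≠ w j ∧ ¬ G.Adj (v i) (w j) := by
    intro i j hi hj hni hnj
    have hc_vi : G.Adj (w 5) (v i) := hcvadj i
    constructor
    · intro he; exact hnj (he ▸ hc_vi.symm)
    · intro hadj
      rcases h5 (v i) (w j) (v 1) (w 5) (hvne i 1 hi) (hwne j 5 hj) hadj
        (hv1wadj j).symm (hv1wadj 5) hc_vi with h | h
      · exact hni h.symm
      · exact hnj h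
  have s31 := step2 3 1 (by decide) (by decide) hnv13 hnw15
  have s32 := step2 3 2 (by decide) (by decide) hnv13 hnw25
  have s33 := step2 3 3 (by decide) (by decide) hnv13 hnw35
  have s41 := step2 4 1 (by decide) (by decide) hnv14 hnw15
  -- Step 3: extended wheel condition on (w 5; v) with apex w 1
  obtain ⟨z1, hz1c, hz1w1, hz1v⟩ :=
    hext (w 5) (w 1) v ⟨hvinj, hcvne, hvadj, hcvadj⟩
      (by rw [hplanar]; exact hw01.symm) (hv1wadj 1).symm (hwne 1 5 (by decide)) hnw15
      (by
        intro i h0 h1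
        rcases h2345 i h0 h1 with rfl | rfl | rfl
        · rw [hshare]; exact ⟨hwne 1 4 (by decide), hnw14⟩
        · exact ⟨s31.1.symm, fun h => s31.2 h.symm⟩
        · exact ⟨s41.1.symm, fun h => s41.2 h.symm⟩)
  by_cases hz1eq : z1 = w 2
  · -- z1 = w 2: z1 itself works
    refine ⟨z1, fun i => Or.inr (hz1v i), ?_⟩
    intro j
    rcases h6cases j with rfl | rfl | rfl | rfl | rfl | rfl
    · right; rw [← hplanar]; exact hz1v 0
    · right; exact hz1w1
    · left; exact hz1eq
    · right; rw [hz1eq]; exact hw23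
    · right; rw [← hshare]; exact hz1v 2
    · right; exact hz1c
  · -- z1 ≠ w 2: build the 5-wheel (v 1; w 4, z1, w 1, w 2, w 3)
    have hz1w4 : G.Adj z1 (w 4) := by rw [← hshare]; exact hz1v 2
    have hz1ne3 : z1 ≠ w 3 := fun h => hnw31 (h ▸ hz1w1)
    obtain ⟨r, hr0, hr1, hr2, hr3, hr4⟩ :
        ∃ r : ZMod 5 → V, r 0 = w 4 ∧ r 1 = z1 ∧ r 2 = w 1 ∧ r 3 = w 2 ∧ r 4 = w 3 := by
      refine ⟨fun i => if i = 0 then w 4 else if i = 1 then z1 else if i = 2 then w 1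
        else if i = 3 then w 2 else w 3, ?_, ?_, ?_, ?_, ?_⟩ <;>
        simp only [if_neg (show (1:ZMod 5) ≠ 0 by decide), if_pos rfl,
          if_neg (show (2:ZMod 5) ≠ 0 by decide), if_neg (show (2:ZMod 5) ≠ 1 by decide),
          if_neg (show (3:ZMod 5) ≠ 0 by decide), if_neg (show (3:ZMod 5) ≠ 1 by decide),
          if_neg (show (3:ZMod 5) ≠ 2 by decide),
          if_neg (show (4:ZMod 5) ≠ 0 by decide), if_neg (show (4:ZMod 5) ≠ 1 by decide),
          if_neg (show (4:ZMod 5) ≠ 2 by decide), if_neg (show (4:ZMod 5) ≠ 3 by decide), if_true]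
    have d1 : w 4 ≠ z1 := hz1w4.ne'
    have d2 : z1 ≠ w 4 := hz1w4.ne
    have d3 : w 4 ≠ w 1 := hwne 4 1 (by decide)
    have d4 : w 1 ≠ w 4 := hwne 1 4 (by decide)
    have d5 : w 4 ≠ w 2 := hwne 4 2 (by decide)
    have d6 : w 2 ≠ w 4 := hwne 2 4 (by decide)
    have d7 : w 4 ≠ w 3 := hwne 4 3 (by decide)
    have d8 : w 3 ≠ w 4 := hwne 3 4 (by decide)
    have d9 : z1 ≠ w 1 := hz1w1.ne
    have d10 : w 1 ≠ z1 := hz1w1.ne'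
    have d11 : z1 ≠ w 2 := hz1eq
    have d12 : w 2 ≠ z1 := fun h => hz1eq h.symm
    have d13 : z1 ≠ w 3 := hz1ne3
    have d14 : w 3 ≠ z1 := fun h => hz1ne3 h.symm
    have d15 : w 1 ≠ w 2 := hwne 1 2 (by decide)
    have d16 : w 2 ≠ w 1 := hwne 2 1 (by decide)
    have d17 : w 1 ≠ w 3 := hwne 1 3 (by decide)
    have d18 : w 3 ≠ w 1 := hwne 3 1 (by decide)
    have d19 : w 2 ≠ w 3 := hwne 2 3 (by decide)
    have d20 : w 3 ≠ w 2 := hwne 3 2 (by decide)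
    have hrinj : Function.Injective r := by
      intro a b hab
      rcases h5cases a with rfl | rfl | rfl | rfl | rfl <;>
        rcases h5cases b with rfl | rfl | rfl | rfl | rfl <;>
        simp only [hr0, hr1, hr2, hr3, hr4] at hab <;>
        first
          | rfl
          | exact absurd hab (by assumption)
    have hwheel : IsWheel G (v 1) r := by
      refine ⟨hrinj, ?_, ?_, ?_⟩
      · intro i
        rcases h5cases i with rfl | rfl | rfl | rfl | rfl
        · rw [hr0]; exact (hv1wadj 4).ne
        · rw [hr1]; exact (hz1v 1).ne'
        · rw [hr2]; exact (hv1wadj 1).ne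
        · rw [hr3]; exact (hv1wadj 2).ne
        · rw [hr4]; exact (hv1wadj 3).ne
      · intro i
        rcases h5cases i with rfl | rfl | rfl | rfl | rfl
        · rw [show ((0:ZMod 5)+1) = 1 from by decide, hr0, hr1]; exact hz1w4.symm
        · rw [show ((1:ZMod 5)+1) = 2 from by decide, hr1, hr2]; exact hz1w1
        · rw [show ((2:ZMod 5)+1) = 3 from by decide, hr2, hr3]; exact hw12
        · rw [show ((3:ZMod 5)+1) = 4 from by decide, hr3, hr4]; exact hw23
        · rw [show ((4:ZMod 5)+1) = 0 from by decide, hr4, hr0]; exact hw34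
      · intro i
        rcases h5cases i with rfl | rfl | rfl | rfl | rfl
        · rw [hr0]; exact hv1wadj 4
        · rw [hr1]; exact (hz1v 1).symm
        · rw [hr2]; exact hv1wadj 1
        · rw [hr3]; exact hv1wadj 2
        · rw [hr4]; exact hv1wadj 3
    obtain ⟨z, hzv1, hzv3, hzr⟩ :=
      hext (v 1) (v 3) r hwheel
        (by rw [hr0, ← hshare]; exact hv23.symm)
        (by rw [hr1]; exact (hz1v 3).symm)
        (hvne 3 1 (by decide)) hnv31
        (by
          intro i h0 h1
          rcases h2345 i h0 h1 with rfl | rfl | rfl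
          · rw [hr2]; exact s31
          · rw [hr3]; exact s32
          · rw [hr4]; exact s33)
    have hzw4 : G.Adj z (w 4) := by have := hzr 0; rwa [hr0] at this
    have hzw1 : G.Adj z (w 1) := by have := hzr 2; rwa [hr2] at this
    have hzw2 : G.Adj z (w 2) := by have := hzr 3; rwa [hr3] at this
    have hzw3 : G.Adj z (w 3) := by have := hzr 4; rwa [hr4] at this
    -- z is adjacent to w 5 (the other center)
    have hznew5 : z ≠ w 5 := fun h => hnw51 (h ▸ hzw1)
    have hzc : G.Adj z (w 5) := by
      rcases h5 z (v 3) (w 5) (v 1) hznew5 (hvne 3 1 (by decide)) hzv3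
        (hcvadj 3).symm (hcvadj 1) hzv1.symm with h | h
      · exact h
      · exact absurd h hnv31
    -- z is adjacent to w 0 = v 0
    have hznew0 : z ≠ w 0 := fun h => hnv03 (by rw [hplanar]; exact h ▸ hzv3)
    have hzw0 : G.Adj z (w 0) := by
      rcases h5 z (w 1) (w 0) (w 5) hznew0 (hwne 1 5 (by decide)) hzw1
        hw01.symm hw50.symm hzc.symm with h | h
      · exact h
      · exact absurd h hnw15
    have hzv0 : G.Adj z (v 0) := by rw [hplanar]; exact hzw0
    -- z is adjacent to v 4
    have hznev4 : z ≠ v 4 := fun h => s41.2 (h ▸ hzw1)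
    have hzv4 : G.Adj z (v 4) := by
      rcases h5 z (v 0) (v 4) (v 3) hznev4 (hvne 0 3 (by decide)) hzv0
        hv40.symm hv34.symm hzv3.symm with h | h
      · exact h
      · exact absurd h hnv03
    refine ⟨z, ?_, ?_⟩
    · intro i
      rcases h5cases i with rfl | rfl | rfl | rfl | rfl
      · exact Or.inr hzv0
      · exact Or.inr hzv1
      · exact Or.inr (by rw [hshare]; exact hzw4)
      · exact Or.inr hzv3
      · exact Or.inr hzv4
    · intro j
      rcases h6cases j with rfl | rfl | rfl | rfl | rfl | rfl
      · exact Or.inr hzw0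
      · exact Or.inr hzw1
      · exact Or.inr hzw2
      · exact Or.inr hzw3
      · exact Or.inr hzw4
      · exact Or.inr hzc
end

section
/- Every locally weakly systolic complex is 7-located and locally 5-large. That is, if X is a flag 5-large simplicial complex in which every extended 5-wheel is contained in the link of a vertex, then every dwheel in X with full wheels and boundary length at most 7 is contained in the link of a vertex. -/
section Helpers

variable {V : Type*} {G : SimpleGraph V}

lemma IsWheel.center_adj {k : ℕ} {c : V} {r : ZMod k → V} (h : IsWheel G c r) (i : ZMod k) :
    G.Adj c (r i) := h.2.2.2 i

lemma IsWheel.cyc {k : ℕ} {c : V} {r : ZMod k → V} (h : IsWheel G c r) (i j : ZMod k)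
    (e : j = i + 1) : G.Adj (r i) (r j) := by rw [e]; exact h.2.2.1 i

lemma IsFullWheel.nadj {k : ℕ} {c : V} {r : ZMod k → V} (h : IsFullWheel G c r) (i j : ZMod k)
    (h1 : j ≠ i + 1) (h2 : i ≠ j + 1) : ¬ G.Adj (r i) (r j) :=
  fun ha => ((h.2 i j ha).elim h1 h2)

lemma IsFullWheel.rne {k : ℕ} {c : V} {r : ZMod k → V} (h : IsFullWheel G c r) (i j : ZMod k)
    (hij : i ≠ j) : r i ≠ r j := fun e => hij (h.1.1 e)

lemma IsWheel.rot {k : ℕ} {c : V} {r : ZMod k → V}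
    (h : IsWheel G c r) (s : ZMod k) : IsWheel G c (fun i => r (i + s)) := by
  obtain ⟨hinj, hc, hcyc, hadj⟩ := h
  refine ⟨fun i j hij => ?_, fun i => hc _, fun i => ?_, fun i => hadj _⟩
  · exact add_right_cancel (hinj hij)
  · have t := hcyc (i + s)
    have e : i + s + 1 = i + 1 + s := by ring
    rwa [e] at t

lemma IsFullWheel.negr {k : ℕ} {c : V} {r : ZMod k → V} (h : IsFullWheel G c r) :
    IsFullWheel G c (fun i => r (-i)) := by
  obtain ⟨⟨hinj, hc, hcyc, hadj⟩, hfull⟩ := h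
  refine ⟨⟨fun i j hij => ?_, fun i => hc _, fun i => ?_, fun i => hadj _⟩, fun i j ha => ?_⟩
  · exact neg_injective (hinj hij)
  · have t := hcyc (-i - 1)
    rw [show -i - 1 + 1 = -i by ring] at t
    show G.Adj (r (-i)) (r (-(i + 1)))
    rw [show -(i + 1) = -i - 1 by ring]
    exact t.symm
  · rcases hfull (-i) (-j) ha with h' | h'
    · right; linear_combination h'
    · left; linear_combination h'

lemma quad (h5 : FiveLarge G) {a b c d : V} (e1 : G.Adj a b) (e2 : G.Adj b c)
    (e3 : G.Adj c d) (e4 : G.Adj d a) (hac : a ≠ c) (hbd : b ≠ d) (hn : ¬ G.Adj b d) :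
    G.Adj a c := (h5 a b c d hac hbd e1 e2 e3 e4).resolve_right hn

lemma quadF (h5 : FiveLarge G) {a b c d : V} (e1 : G.Adj a b) (e2 : G.Adj b c)
    (e3 : G.Adj c d) (e4 : G.Adj d a) (hac : a ≠ c) (hbd : b ≠ d)
    (hn1 : ¬ G.Adj a c) (hn2 : ¬ G.Adj b d) : False :=
  (h5 a b c d hac hbd e1 e2 e3 e4).elim hn1 hn2

lemma neq_of {a b x : V} (h1 : G.Adj a x) (h2 : ¬ G.Adj b x) : a ≠ b :=
  fun e => h2 (e ▸ h1)

lemma no_full_4wheel (h5 : FiveLarge G) {c : V} {r : ZMod 4 → V}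
    (h : IsFullWheel G c r) : False :=
  quadF h5 (h.1.cyc 0 1 (by decide)) (h.1.cyc 1 2 (by decide)) (h.1.cyc 2 3 (by decide))
    (h.1.cyc 3 0 (by decide)) (h.rne 0 2 (by decide)) (h.rne 1 3 (by decide))
    (h.nadj 0 2 (by decide) (by decide)) (h.nadj 1 3 (by decide) (by decide))

lemma ext_apply (hext : ExtFiveWheelCond G) (c a : V) (r : ZMod 5 → V) (s : ZMod 5)
    (hw : IsWheel G c r) (h0 : G.Adj a (r s)) (h1 : G.Adj a (r (s + 1)))
    (hne : a ≠ c) (hna : ¬ G.Adj a c)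
    (hrest : ∀ i : ZMod 5, i ≠ s → i ≠ s + 1 → a ≠ r i ∧ ¬ G.Adj a (r i)) :
    ∃ z : V, G.Adj z c ∧ G.Adj z a ∧ ∀ i, G.Adj z (r i) := by
  have hrest' : ∀ i : ZMod 5, i ≠ 0 → i ≠ 1 →
      a ≠ (fun i => r (i + s)) i ∧ ¬ G.Adj a ((fun i => r (i + s)) i) := by
    intro i hi0 hi1
    refine hrest (i + s) (fun h => hi0 ?_) (fun h => hi1 ?_)
    · have e : i + s = 0 + s := by rw [zero_add]; exact h
      exact add_right_cancel e
    · have e : i + s = 1 + s := by rw [h]; ring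
      exact add_right_cancel e
  obtain ⟨z, hz1, hz2, hz3⟩ := hext c a (fun i => r (i + s)) (hw.rot s)
    (by show G.Adj a (r (0 + s)); rw [zero_add]; exact h0)
    (by show G.Adj a (r (1 + s)); rw [add_comm]; exact h1)
    hne hna hrest'
  refine ⟨z, hz1, hz2, fun j => ?_⟩
  have t : G.Adj z (r (j - s + s)) := hz3 (j - s)
  rwa [show j - s + s = j by ring] at t

def fv {V : Type*} (a b c d e : V) : ZMod 5 → V :=
  fun i => if i = 0 then a else if i = 1 then b else if i = 2 then c else if i = 3 then d else e

lemma fv0 (a b c d e : V) : fv a b c d e 0 = a := by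
  show (if (0:ZMod 5) = 0 then a else _) = a
  rw [if_pos rfl]

lemma fv1 (a b c d e : V) : fv a b c d e 1 = b := by
  show (if (1:ZMod 5) = 0 then a else if (1:ZMod 5) = 1 then b else _) = b
  rw [if_neg (by decide), if_pos rfl]

lemma fv2 (a b c d e : V) : fv a b c d e 2 = c := by
  show (if (2:ZMod 5) = 0 then a else if (2:ZMod 5) = 1 then b
    else if (2:ZMod 5) = 2 then c else _) = c
  rw [if_neg (by decide), if_neg (by decide), if_pos rfl]

lemma fv3 (a b c d e : V) : fv a b c d e 3 = d := by
  show (if (3:ZMod 5) = 0 then a else if (3:ZMod 5) = 1 then b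
    else if (3:ZMod 5) = 2 then c else if (3:ZMod 5) = 3 then d else _) = d
  rw [if_neg (by decide), if_neg (by decide), if_neg (by decide), if_pos rfl]

lemma fv4 (a b c d e : V) : fv a b c d e 4 = e := by
  show (if (4:ZMod 5) = 0 then a else if (4:ZMod 5) = 1 then b
    else if (4:ZMod 5) = 2 then c else if (4:ZMod 5) = 3 then d else e) = e
  rw [if_neg (by decide), if_neg (by decide), if_neg (by decide), if_neg (by decide)]

lemma cases5 (i : ZMod 5) : i = 0 ∨ i = 1 ∨ i = 2 ∨ i = 3 ∨ i = 4 := by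
  revert i; decide

lemma cases6 (i : ZMod 6) : i = 0 ∨ i = 1 ∨ i = 2 ∨ i = 3 ∨ i = 4 ∨ i = 5 := by
  revert i; decide

lemma fv_inj {a b c d e : V} (hab : a ≠ b) (hac : a ≠ c) (had : a ≠ d) (hae : a ≠ e)
    (hbc : b ≠ c) (hbd : b ≠ d) (hbe : b ≠ e) (hcd : c ≠ d) (hce : c ≠ e) (hde : d ≠ e) :
    Function.Injective (fv a b c d e) := by
  intro i j hij
  rcases cases5 i with rfl|rfl|rfl|rfl|rfl <;> rcases cases5 j with rfl|rfl|rfl|rfl|rfl <;>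
    simp only [fv0, fv1, fv2, fv3, fv4] at hij <;>
    first
      | rfl
      | exact absurd hij hab | exact absurd hij.symm hab
      | exact absurd hij hac | exact absurd hij.symm hac
      | exact absurd hij had | exact absurd hij.symm had
      | exact absurd hij hae | exact absurd hij.symm hae
      | exact absurd hij hbc | exact absurd hij.symm hbc
      | exact absurd hij hbd | exact absurd hij.symm hbd
      | exact absurd hij hbe | exact absurd hij.symm hbe
      | exact absurd hij hcd | exact absurd hij.symm hcd
      | exact absurd hij hce | exact absurd hij.symm hce
      | exact absurd hij hde | exact absurd hij.symm hde

end Helpers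
section Cases
variable {V : Type*} {G : SimpleGraph V}

lemma case55p (h5 : FiveLarge G) (hext : ExtFiveWheelCond G) (v w : ZMod 5 → V)
    (h1 : IsFullWheel G (w 4) v) (h2 : IsFullWheel G (v 1) w)
    (heq2 : v 2 = w 3) (heq0 : v 0 = w 0) :
    ∃ z : V, (∀ i, G.Adj z (v i)) ∧ (∀ i, G.Adj z (w i)) := by
  have hw1 := h1.1
  have hw2 := h2.1
  have ev01 : G.Adj (v 0) (v 1) := hw1.cyc 0 1 (by decide)
  have ev12 : G.Adj (v 1) (v 2) := hw1.cyc 1 2 (by decide)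
  have ev23 : G.Adj (v 2) (v 3) := hw1.cyc 2 3 (by decide)
  have ev34 : G.Adj (v 3) (v 4) := hw1.cyc 3 4 (by decide)
  have ev40 : G.Adj (v 4) (v 0) := hw1.cyc 4 0 (by decide)
  have ew01 : G.Adj (w 0) (w 1) := hw2.cyc 0 1 (by decide)
  have ew12 : G.Adj (w 1) (w 2) := hw2.cyc 1 2 (by decide)
  have ew40 : G.Adj (w 4) (w 0) := hw2.cyc 4 0 (by decide)
  have c1v : ∀ i, G.Adj (w 4) (v i) := hw1.center_adj
  have c2w : ∀ i, G.Adj (v 1) (w i) := hw2.center_adj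
  have nv31 : ¬ G.Adj (v 3) (v 1) := h1.nadj 3 1 (by decide) (by decide)
  have nv30 : ¬ G.Adj (v 3) (v 0) := h1.nadj 3 0 (by decide) (by decide)
  have nv41 : ¬ G.Adj (v 4) (v 1) := h1.nadj 4 1 (by decide) (by decide)
  have nv42 : ¬ G.Adj (v 4) (v 2) := h1.nadj 4 2 (by decide) (by decide)
  have nw14 : ¬ G.Adj (w 1) (w 4) := h2.nadj 1 4 (by decide) (by decide)
  have nw13 : ¬ G.Adj (w 1) (w 3) := h2.nadj 1 3 (by decide) (by decide)
  have nw24 : ¬ G.Adj (w 2) (w 4) := h2.nadj 2 4 (by decide) (by decide)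
  have nw20 : ¬ G.Adj (w 2) (w 0) := h2.nadj 2 0 (by decide) (by decide)
  have av3w3 : G.Adj (v 3) (w 3) := by rw [← heq2]; exact ev23.symm
  have av3w4 : G.Adj (v 3) (w 4) := (c1v 3).symm
  have av4w4 : G.Adj (v 4) (w 4) := (c1v 4).symm
  have nv3w0 : ¬ G.Adj (v 3) (w 0) := by rw [← heq0]; exact nv30
  have dv3w0 : v 3 ≠ w 0 := by rw [← heq0]; exact h1.rne 3 0 (by decide)
  have dv3w1 : v 3 ≠ w 1 := neq_of av3w3 nw13
  have dv3w2 : v 3 ≠ w 2 := neq_of av3w4 nw24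
  have dv4w1 : v 4 ≠ w 1 := neq_of av4w4 nw14
  have dv4w2 : v 4 ≠ w 2 := neq_of av4w4 nw24
  have dv31 : v 3 ≠ v 1 := h1.rne 3 1 (by decide)
  have dv41 : v 4 ≠ v 1 := h1.rne 4 1 (by decide)
  have hP : ¬ G.Adj (v 3) (w 1) := fun h =>
    quadF h5 h ew01.symm ew40.symm (c1v 3) dv3w0 (h2.rne 1 4 (by decide)) nv3w0 nw14
  have hS : ¬ G.Adj (v 4) (w 2) := fun h =>
    quadF h5 h.symm ev40 ev01 (c2w 2) (by rw [heq0]; exact h2.rne 2 0 (by decide)) dv41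
      (by rw [heq0]; exact nw20) nv41
  by_cases hQ : G.Adj (v 3) (w 2)
  · have hR : ¬ G.Adj (v 4) (w 1) := fun hR =>
      quadF h5 hQ ew12.symm hR.symm ev34.symm dv3w1 dv4w2.symm hP (fun h => hS h.symm)
    have h0 : G.Adj (v 4) (w 4) := av4w4
    have h1' : G.Adj (v 4) (w (4 + 1)) := by
      rw [show (4 + 1 : ZMod 5) = 0 by decide, ← heq0]; exact ev40
    have hrest : ∀ i : ZMod 5, i ≠ 4 → i ≠ 4 + 1 → v 4 ≠ w i ∧ ¬ G.Adj (v 4) (w i) := by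
      intro i hi0 hi1
      have hi : i = 1 ∨ i = 2 ∨ i = 3 :=
        (by decide : ∀ i : ZMod 5, i ≠ 4 → i ≠ 4 + 1 → i = 1 ∨ i = 2 ∨ i = 3) i hi0 hi1
      rcases hi with rfl | rfl | rfl
      · exact ⟨dv4w1, hR⟩
      · exact ⟨dv4w2, hS⟩
      · refine ⟨?_, ?_⟩
        · rw [← heq2]; exact h1.rne 4 2 (by decide)
        · rw [← heq2]; exact nv42
    obtain ⟨z, hzc, hza, hzw⟩ := ext_apply hext (v 1) (v 4) w 4 hw2 h0 h1' dv41 nv41 hrest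
    have hzv3 : G.Adj z (v 3) :=
      quad h5 hza ev34.symm ev23.symm (by rw [heq2]; exact (hzw 3).symm)
        (neq_of (hzw 1) hP) (h1.rne 4 2 (by decide)) nv42
    refine ⟨z, fun i => ?_, hzw⟩
    rcases cases5 i with rfl|rfl|rfl|rfl|rfl
    · rw [heq0]; exact hzw 0
    · exact hzc
    · rw [heq2]; exact hzw 3
    · exact hzv3
    · exact hza
  · have h0 : G.Adj (v 3) (w 3) := av3w3
    have h1' : G.Adj (v 3) (w (3 + 1)) := by
      rw [show (3 + 1 : ZMod 5) = 4 by decide]; exact av3w4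
    have hrest : ∀ i : ZMod 5, i ≠ 3 → i ≠ 3 + 1 → v 3 ≠ w i ∧ ¬ G.Adj (v 3) (w i) := by
      intro i hi0 hi1
      have hi : i = 0 ∨ i = 1 ∨ i = 2 :=
        (by decide : ∀ i : ZMod 5, i ≠ 3 → i ≠ 3 + 1 → i = 0 ∨ i = 1 ∨ i = 2) i hi0 hi1
      rcases hi with rfl | rfl | rfl
      · exact ⟨dv3w0, nv3w0⟩
      · exact ⟨dv3w1, hP⟩
      · exact ⟨dv3w2, hQ⟩
    obtain ⟨z, hzc, hza, hzw⟩ := ext_apply hext (v 1) (v 3) w 3 hw2 h0 h1' dv31 nv31 hrest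
    have hzv4 : G.Adj z (v 4) :=
      quad h5 hza ev34 ev40 (by rw [heq0]; exact (hzw 0).symm)
        (neq_of (hzw 2) hS) (h1.rne 3 0 (by decide)) nv30
    refine ⟨z, fun i => ?_, hzw⟩
    rcases cases5 i with rfl|rfl|rfl|rfl|rfl
    · rw [heq0]; exact hzw 0
    · exact hzc
    · rw [heq2]; exact hzw 3
    · exact hza
    · exact hzv4

end Cases
section Cases2
variable {V : Type*} {G : SimpleGraph V}

lemma case55n (h5 : FiveLarge G) (hext : ExtFiveWheelCond G) (v w : ZMod 5 → V)
    (h1 : IsFullWheel G (w 4) v) (h2 : IsFullWheel G (v 1) w)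
    (heq2 : v 2 = w 3) (hne0 : v 0 ≠ w 0) (hadj0 : G.Adj (v 0) (w 0)) :
    ∃ z : V, (∀ i, G.Adj z (v i)) ∧ (∀ i, G.Adj z (w i)) := by
  have hw1 := h1.1
  have hw2 := h2.1
  have ev01 : G.Adj (v 0) (v 1) := hw1.cyc 0 1 (by decide)
  have ev12 : G.Adj (v 1) (v 2) := hw1.cyc 1 2 (by decide)
  have ev23 : G.Adj (v 2) (v 3) := hw1.cyc 2 3 (by decide)
  have ev34 : G.Adj (v 3) (v 4) := hw1.cyc 3 4 (by decide)
  have ev40 : G.Adj (v 4) (v 0) := hw1.cyc 4 0 (by decide)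
  have ew01 : G.Adj (w 0) (w 1) := hw2.cyc 0 1 (by decide)
  have ew12 : G.Adj (w 1) (w 2) := hw2.cyc 1 2 (by decide)
  have ew23 : G.Adj (w 2) (w 3) := hw2.cyc 2 3 (by decide)
  have ew34 : G.Adj (w 3) (w 4) := hw2.cyc 3 4 (by decide)
  have ew40 : G.Adj (w 4) (w 0) := hw2.cyc 4 0 (by decide)
  have c1v : ∀ i, G.Adj (w 4) (v i) := hw1.center_adj
  have c2w : ∀ i, G.Adj (v 1) (w i) := hw2.center_adj
  have nv31 : ¬ G.Adj (v 3) (v 1) := h1.nadj 3 1 (by decide) (by decide)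
  have nv30 : ¬ G.Adj (v 3) (v 0) := h1.nadj 3 0 (by decide) (by decide)
  have nv03 : ¬ G.Adj (v 0) (v 3) := h1.nadj 0 3 (by decide) (by decide)
  have nv41 : ¬ G.Adj (v 4) (v 1) := h1.nadj 4 1 (by decide) (by decide)
  have nv42 : ¬ G.Adj (v 4) (v 2) := h1.nadj 4 2 (by decide) (by decide)
  have nv14 : ¬ G.Adj (v 1) (v 4) := h1.nadj 1 4 (by decide) (by decide)
  have nv13 : ¬ G.Adj (v 1) (v 3) := h1.nadj 1 3 (by decide) (by decide)
  have nw14 : ¬ G.Adj (w 1) (w 4) := h2.nadj 1 4 (by decide) (by decide)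
  have nw13 : ¬ G.Adj (w 1) (w 3) := h2.nadj 1 3 (by decide) (by decide)
  have nw24 : ¬ G.Adj (w 2) (w 4) := h2.nadj 2 4 (by decide) (by decide)
  have nw03 : ¬ G.Adj (w 0) (w 3) := h2.nadj 0 3 (by decide) (by decide)
  have av3w3 : G.Adj (v 3) (w 3) := by rw [← heq2]; exact ev23.symm
  have av3w4 : G.Adj (v 3) (w 4) := (c1v 3).symm
  have av4w4 : G.Adj (v 4) (w 4) := (c1v 4).symm
  -- always-false cross adjacencies
  have nA : ¬ G.Adj (v 3) (w 0) := fun h =>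
    quadF h5 h.symm ev23.symm ev12.symm (c2w 0)
      (by rw [heq2]; exact h2.rne 0 3 (by decide)) (h1.rne 3 1 (by decide))
      (by rw [heq2]; exact nw03) nv31
  have nD : ¬ G.Adj (v 0) (w 2) := fun h =>
    quadF h5 h ew23 ew34 (c1v 0)
      (by rw [← heq2]; exact h1.rne 0 2 (by decide)) (h2.rne 2 4 (by decide))
      (by rw [← heq2]; exact h1.nadj 0 2 (by decide) (by decide)) nw24
  have n_v3w1 : ¬ G.Adj (v 3) (w 1) := fun h =>
    quadF h5 (c1v 3).symm (c2w 4).symm (c2w 1) h.symm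
      (h1.rne 3 1 (by decide)) (h2.rne 4 1 (by decide)) nv31 (fun hh => nw14 hh.symm)
  have n_v3w2 : ¬ G.Adj (v 3) (w 2) := fun h =>
    quadF h5 (c1v 3).symm (c2w 4).symm (c2w 2) h.symm
      (h1.rne 3 1 (by decide)) (h2.rne 4 2 (by decide)) nv31 (fun hh => nw24 hh.symm)
  have n_v4w1 : ¬ G.Adj (v 4) (w 1) := fun h =>
    quadF h5 (c1v 4).symm (c2w 4).symm (c2w 1) h.symm
      (h1.rne 4 1 (by decide)) (h2.rne 4 1 (by decide)) nv41 (fun hh => nw14 hh.symm)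
  have n_v4w2 : ¬ G.Adj (v 4) (w 2) := fun h =>
    quadF h5 (c1v 4).symm (c2w 4).symm (c2w 2) h.symm
      (h1.rne 4 1 (by decide)) (h2.rne 4 2 (by decide)) nv41 (fun hh => nw24 hh.symm)
  -- distinctness
  have dv3w0 : v 3 ≠ w 0 := neq_of av3w3 nw03
  have dv3w1 : v 3 ≠ w 1 := neq_of av3w3 nw13
  have dv3w2 : v 3 ≠ w 2 := neq_of av3w4 nw24
  have dv4w0 : v 4 ≠ w 0 := (neq_of (c2w 0).symm nv41).symm
  have dv4w1 : v 4 ≠ w 1 := neq_of av4w4 nw14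
  have dv4w2 : v 4 ≠ w 2 := neq_of av4w4 nw24
  have dv31 : v 3 ≠ v 1 := h1.rne 3 1 (by decide)
  -- first extended wheel : a = v 3 on W₂
  have h1' : G.Adj (v 3) (w (3 + 1)) := by
    rw [show (3 + 1 : ZMod 5) = 4 by decide]; exact av3w4
  have hrest : ∀ i : ZMod 5, i ≠ 3 → i ≠ 3 + 1 → v 3 ≠ w i ∧ ¬ G.Adj (v 3) (w i) := by
    intro i hi0 hi1
    have hi : i = 0 ∨ i = 1 ∨ i = 2 :=
      (by decide : ∀ i : ZMod 5, i ≠ 3 → i ≠ 3 + 1 → i = 0 ∨ i = 1 ∨ i = 2) i hi0 hi1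
    rcases hi with rfl | rfl | rfl
    · exact ⟨dv3w0, nA⟩
    · exact ⟨dv3w1, n_v3w1⟩
    · exact ⟨dv3w2, n_v3w2⟩
  obtain ⟨z, hzc, hza, hzw⟩ := ext_apply hext (v 1) (v 3) w 3 hw2 av3w3 h1' dv31 nv31 hrest
  have hz_ne_v4 : z ≠ v 4 := neq_of (hzw 1) n_v4w1
  have hz_ne_v0 : z ≠ v 0 := neq_of hza nv03
  by_cases hB : G.Adj (v 4) (w 0)
  · have hzv4 : G.Adj z (v 4) := quad h5 hza ev34 hB (hzw 0).symm hz_ne_v4 dv3w0 nA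
    have hzv0 : G.Adj z (v 0) :=
      quad h5 hzc ev01.symm ev40.symm hzv4.symm hz_ne_v0 (h1.rne 1 4 (by decide)) nv14
    refine ⟨z, fun i => ?_, hzw⟩
    rcases cases5 i with rfl|rfl|rfl|rfl|rfl
    · exact hzv0
    · exact hzc
    · rw [heq2]; exact hzw 3
    · exact hza
    · exact hzv4
  · by_cases hC : G.Adj (v 0) (w 1)
    · have hzv0 : G.Adj z (v 0) :=
        quad h5 (hzw 1) hC.symm (c1v 0).symm (hzw 4).symm hz_ne_v0
          (h2.rne 1 4 (by decide)) nw14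
      have hzv4 : G.Adj z (v 4) :=
        quad h5 hza ev34 ev40 hzv0.symm hz_ne_v4 (h1.rne 3 0 (by decide)) nv30
      refine ⟨z, fun i => ?_, hzw⟩
      rcases cases5 i with rfl|rfl|rfl|rfl|rfl
      · exact hzv0
      · exact hzc
      · rw [heq2]; exact hzw 3
      · exact hza
      · exact hzv4
    · by_cases hE : G.Adj z (v 4)
      · have hzv0 : G.Adj z (v 0) :=
          quad h5 hzc ev01.symm ev40.symm hE.symm hz_ne_v0 (h1.rne 1 4 (by decide)) nv14
        refine ⟨z, fun i => ?_, hzw⟩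
        rcases cases5 i with rfl|rfl|rfl|rfl|rfl
        · exact hzv0
        · exact hzc
        · rw [heq2]; exact hzw 3
        · exact hza
        · exact hE
      · -- second extended wheel : center w 0, rim (w 4, v 0, v 1, w 1, z), a = v 4
        have hv4nez : v 4 ≠ z := (neq_of (hzw 1) n_v4w1).symm
        have hv4naz : ¬ G.Adj (v 4) z := fun h => hE h.symm
        have hwheel : IsWheel G (w 0) (fv (w 4) (v 0) (v 1) (w 1) z) := by
          refine ⟨fv_inj (c1v 0).ne ((c2w 4).symm).ne (h2.rne 4 1 (by decide))
            ((hzw 4).symm).ne ev01.ne (neq_of (c1v 0).symm nw14) hz_ne_v0.symm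
            (c2w 1).ne (hzc.symm).ne ((hzw 1).symm).ne, fun i => ?_, fun i => ?_, fun i => ?_⟩
          · rcases cases5 i with rfl|rfl|rfl|rfl|rfl <;> simp only [fv0, fv1, fv2, fv3, fv4]
            exacts [h2.rne 0 4 (by decide), hne0.symm, ((c2w 0).symm).ne,
              h2.rne 0 1 (by decide), ((hzw 0).symm).ne]
          · rcases cases5 i with rfl|rfl|rfl|rfl|rfl
            · simp only [show ((0:ZMod 5)+1) = 1 by decide, fv0, fv1]; exact c1v 0
            · simp only [show ((1:ZMod 5)+1) = 2 by decide, fv1, fv2]; exact ev01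
            · simp only [show ((2:ZMod 5)+1) = 3 by decide, fv2, fv3]; exact c2w 1
            · simp only [show ((3:ZMod 5)+1) = 4 by decide, fv3, fv4]; exact (hzw 1).symm
            · simp only [show ((4:ZMod 5)+1) = 0 by decide, fv4, fv0]; exact hzw 4
          · rcases cases5 i with rfl|rfl|rfl|rfl|rfl <;> simp only [fv0, fv1, fv2, fv3, fv4]
            exacts [ew40.symm, hadj0.symm, (c2w 0).symm, ew01, (hzw 0).symm]
        have h0' : G.Adj (v 4) (fv (w 4) (v 0) (v 1) (w 1) z 0) := by
          rw [fv0]; exact av4w4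
        have h1'' : G.Adj (v 4) (fv (w 4) (v 0) (v 1) (w 1) z (0 + 1)) := by
          rw [show ((0:ZMod 5) + 1) = 1 by decide, fv1]; exact ev40
        have hrest2 : ∀ i : ZMod 5, i ≠ 0 → i ≠ 0 + 1 →
            v 4 ≠ fv (w 4) (v 0) (v 1) (w 1) z i ∧
            ¬ G.Adj (v 4) (fv (w 4) (v 0) (v 1) (w 1) z i) := by
          intro i hi0 hi1
          have hi : i = 2 ∨ i = 3 ∨ i = 4 :=
            (by decide : ∀ i : ZMod 5, i ≠ 0 → i ≠ 0 + 1 → i = 2 ∨ i = 3 ∨ i = 4) i hi0 hi1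
          rcases hi with rfl | rfl | rfl
          · rw [fv2]; exact ⟨h1.rne 4 1 (by decide), nv41⟩
          · rw [fv3]; exact ⟨dv4w1, n_v4w1⟩
          · rw [fv4]; exact ⟨hv4nez, hv4naz⟩
        obtain ⟨z4, hz4c, hz4a, hz4r⟩ :=
          ext_apply hext (w 0) (v 4) (fv (w 4) (v 0) (v 1) (w 1) z) 0 hwheel h0' h1'' dv4w0 hB hrest2
        have hz4w4 : G.Adj z4 (w 4) := by have t := hz4r 0; rwa [fv0] at t
        have hz4v0 : G.Adj z4 (v 0) := by have t := hz4r 1; rwa [fv1] at t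
        have hz4v1 : G.Adj z4 (v 1) := by have t := hz4r 2; rwa [fv2] at t
        have hz4w1 : G.Adj z4 (w 1) := by have t := hz4r 3; rwa [fv3] at t
        have hz4z : G.Adj z4 z := by have t := hz4r 4; rwa [fv4] at t
        have hz4v3 : G.Adj z4 (v 3) :=
          quad h5 hz4a ev34.symm hza.symm hz4z.symm (neq_of hz4w1 n_v3w1) hv4nez hv4naz
        have hz4v2 : G.Adj z4 (v 2) :=
          quad h5 hz4v1 ev12 ev23 hz4v3.symm
            (neq_of hz4w1 (by rw [heq2]; exact fun h => nw13 h.symm))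
            (h1.rne 1 3 (by decide)) nv13
        have hz4w2 : G.Adj z4 (w 2) :=
          quad h5 hz4w1 ew12 (by rw [heq2]; exact ew23) hz4v2.symm
            (neq_of hz4a (fun h => n_v4w2 h.symm))
            (by rw [heq2]; exact h2.rne 1 3 (by decide))
            (by rw [heq2]; exact nw13)
        refine ⟨z4, fun i => ?_, fun i => ?_⟩
        · rcases cases5 i with rfl|rfl|rfl|rfl|rfl
          · exact hz4v0
          · exact hz4v1
          · exact hz4v2
          · exact hz4v3
          · exact hz4a
        · rcases cases5 i with rfl|rfl|rfl|rfl|rfl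
          · exact hz4c
          · exact hz4w1
          · exact hz4w2
          · rw [← heq2]; exact hz4v2
          · exact hz4w4

end Cases2
section Cases3
variable {V : Type*} {G : SimpleGraph V}

lemma case56 (h5 : FiveLarge G) (hext : ExtFiveWheelCond G) (v : ZMod 5 → V) (w : ZMod 6 → V)
    (h1 : IsFullWheel G (w 5) v) (h2 : IsFullWheel G (v 1) w)
    (heq2 : v 2 = w 4) (heq0 : v 0 = w 0) :
    ∃ z : V, (∀ i, G.Adj z (v i)) ∧ (∀ i, G.Adj z (w i)) := by
  have hw1 := h1.1
  have hw2 := h2.1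
  have ev01 : G.Adj (v 0) (v 1) := hw1.cyc 0 1 (by decide)
  have ev12 : G.Adj (v 1) (v 2) := hw1.cyc 1 2 (by decide)
  have ev23 : G.Adj (v 2) (v 3) := hw1.cyc 2 3 (by decide)
  have ev34 : G.Adj (v 3) (v 4) := hw1.cyc 3 4 (by decide)
  have ev40 : G.Adj (v 4) (v 0) := hw1.cyc 4 0 (by decide)
  have ew01 : G.Adj (w 0) (w 1) := hw2.cyc 0 1 (by decide)
  have ew12 : G.Adj (w 1) (w 2) := hw2.cyc 1 2 (by decide)
  have ew23 : G.Adj (w 2) (w 3) := hw2.cyc 2 3 (by decide)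
  have ew34 : G.Adj (w 3) (w 4) := hw2.cyc 3 4 (by decide)
  have c1v : ∀ i, G.Adj (w 5) (v i) := hw1.center_adj
  have c2w : ∀ i, G.Adj (v 1) (w i) := hw2.center_adj
  have nv31 : ¬ G.Adj (v 3) (v 1) := h1.nadj 3 1 (by decide) (by decide)
  have nv30 : ¬ G.Adj (v 3) (v 0) := h1.nadj 3 0 (by decide) (by decide)
  have nv41 : ¬ G.Adj (v 4) (v 1) := h1.nadj 4 1 (by decide) (by decide)
  have nv13 : ¬ G.Adj (v 1) (v 3) := h1.nadj 1 3 (by decide) (by decide)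
  have nw14 : ¬ G.Adj (w 1) (w 4) := h2.nadj 1 4 (by decide) (by decide)
  have nw15 : ¬ G.Adj (w 1) (w 5) := h2.nadj 1 5 (by decide) (by decide)
  have nw35 : ¬ G.Adj (w 3) (w 5) := h2.nadj 3 5 (by decide) (by decide)
  have nw24 : ¬ G.Adj (w 2) (w 4) := h2.nadj 2 4 (by decide) (by decide)
  have nw25 : ¬ G.Adj (w 2) (w 5) := h2.nadj 2 5 (by decide) (by decide)
  have nw20 : ¬ G.Adj (w 2) (w 0) := h2.nadj 2 0 (by decide) (by decide)
  have nw30 : ¬ G.Adj (w 3) (w 0) := h2.nadj 3 0 (by decide) (by decide)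
  have av3w4 : G.Adj (v 3) (w 4) := by rw [← heq2]; exact ev23.symm
  have av3w5 : G.Adj (v 3) (w 5) := (c1v 3).symm
  have av4w5 : G.Adj (v 4) (w 5) := (c1v 4).symm
  -- all cross adjacencies are impossible
  have n13 : ¬ G.Adj (w 1) (v 3) := fun h =>
    quadF h5 h av3w4 (c2w 4).symm (c2w 1)
      (h2.rne 1 4 (by decide)) (h1.rne 3 1 (by decide)) nw14 nv31
  have n14 : ¬ G.Adj (w 1) (v 4) := fun h =>
    quadF h5 av4w5 (c1v 1) (c2w 1) h
      (h1.rne 4 1 (by decide)) (h2.rne 5 1 (by decide)) nv41 (fun hh => nw15 hh.symm)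
  have n33 : ¬ G.Adj (w 3) (v 3) := fun h =>
    quadF h5 av3w5 (c1v 1) (c2w 3) h
      (h1.rne 3 1 (by decide)) (h2.rne 5 3 (by decide)) nv31 (fun hh => nw35 hh.symm)
  have n34 : ¬ G.Adj (w 3) (v 4) := fun h =>
    quadF h5 h ev40 ev01 (c2w 3)
      (by rw [heq0]; exact h2.rne 3 0 (by decide)) (h1.rne 4 1 (by decide))
      (by rw [heq0]; exact nw30) nv41
  have n23 : ¬ G.Adj (w 2) (v 3) := fun h =>
    quadF h5 h.symm ew23 (by rw [heq2]; exact ew34) ev23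
      (neq_of av3w5 nw35) (by rw [heq2]; exact h2.rne 2 4 (by decide))
      (fun hh => n33 hh.symm) (by rw [heq2]; exact nw24)
  have n24 : ¬ G.Adj (w 2) (v 4) := fun h =>
    quadF h5 h.symm ew12.symm (by rw [heq0]; exact ew01.symm) ev40.symm
      (neq_of av4w5 nw15) (by rw [heq0]; exact h2.rne 2 0 (by decide))
      (fun hh => n14 hh.symm) (by rw [heq0]; exact nw20)
  -- step 1 : a = w 1 on W₁
  have dv3w1 : v 3 ≠ w 1 := neq_of av3w4 nw14
  have dv3w2 : v 3 ≠ w 2 := neq_of av3w5 nw25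
  have dv3w3 : v 3 ≠ w 3 := neq_of av3w5 nw35
  have dv4w1 : v 4 ≠ w 1 := neq_of av4w5 nw15
  have h0s1 : G.Adj (w 1) (v 0) := by rw [heq0]; exact ew01.symm
  have h1s1 : G.Adj (w 1) (v (0 + 1)) := by
    rw [show ((0:ZMod 5) + 1) = 1 by decide]; exact (c2w 1).symm
  have hrest1 : ∀ i : ZMod 5, i ≠ 0 → i ≠ 0 + 1 → w 1 ≠ v i ∧ ¬ G.Adj (w 1) (v i) := by
    intro i hi0 hi1
    have hi : i = 2 ∨ i = 3 ∨ i = 4 :=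
      (by decide : ∀ i : ZMod 5, i ≠ 0 → i ≠ 0 + 1 → i = 2 ∨ i = 3 ∨ i = 4) i hi0 hi1
    rcases hi with rfl | rfl | rfl
    · refine ⟨?_, ?_⟩
      · rw [heq2]; exact h2.rne 1 4 (by decide)
      · rw [heq2]; exact nw14
    · exact ⟨dv3w1.symm, n13⟩
    · exact ⟨dv4w1.symm, n14⟩
  obtain ⟨z, hzc, hza, hzv⟩ := ext_apply hext (w 5) (w 1) v 0 hw1 h0s1 h1s1
    (h2.rne 1 5 (by decide)) nw15 hrest1
  have hzw4 : G.Adj z (w 4) := by rw [← heq2]; exact hzv 2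
  -- step 2 : wheel (v 1 ; w 1, w 2, w 3, w 4, z), a = v 3
  have hz_ne_w2 : z ≠ w 2 := neq_of hzc nw25
  have hz_ne_w3 : z ≠ w 3 := neq_of hzc nw35
  have hwheel2 : IsWheel G (v 1) (fv (w 1) (w 2) (w 3) (w 4) z) := by
    refine ⟨fv_inj (h2.rne 1 2 (by decide)) (h2.rne 1 3 (by decide)) (h2.rne 1 4 (by decide))
      (hza.symm).ne (h2.rne 2 3 (by decide)) (h2.rne 2 4 (by decide)) hz_ne_w2.symm
      (h2.rne 3 4 (by decide)) hz_ne_w3.symm (hzw4.symm).ne, fun i => ?_, fun i => ?_, fun i => ?_⟩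
    · rcases cases5 i with rfl|rfl|rfl|rfl|rfl <;> simp only [fv0, fv1, fv2, fv3, fv4]
      exacts [(c2w 1).ne, (c2w 2).ne, (c2w 3).ne, (c2w 4).ne, ((hzv 1).symm).ne]
    · rcases cases5 i with rfl|rfl|rfl|rfl|rfl
      · simp only [show ((0:ZMod 5)+1) = 1 by decide, fv0, fv1]; exact ew12
      · simp only [show ((1:ZMod 5)+1) = 2 by decide, fv1, fv2]; exact ew23
      · simp only [show ((2:ZMod 5)+1) = 3 by decide, fv2, fv3]; exact ew34
      · simp only [show ((3:ZMod 5)+1) = 4 by decide, fv3, fv4]; exact hzw4.symm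
      · simp only [show ((4:ZMod 5)+1) = 0 by decide, fv4, fv0]; exact hza
    · rcases cases5 i with rfl|rfl|rfl|rfl|rfl <;> simp only [fv0, fv1, fv2, fv3, fv4]
      exacts [c2w 1, c2w 2, c2w 3, c2w 4, (hzv 1).symm]
  have h0s2 : G.Adj (v 3) (fv (w 1) (w 2) (w 3) (w 4) z 3) := by
    rw [fv3]; exact av3w4
  have h1s2 : G.Adj (v 3) (fv (w 1) (w 2) (w 3) (w 4) z (3 + 1)) := by
    rw [show ((3:ZMod 5) + 1) = 4 by decide, fv4]; exact (hzv 3).symm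
  have hrest2 : ∀ i : ZMod 5, i ≠ 3 → i ≠ 3 + 1 →
      v 3 ≠ fv (w 1) (w 2) (w 3) (w 4) z i ∧
      ¬ G.Adj (v 3) (fv (w 1) (w 2) (w 3) (w 4) z i) := by
    intro i hi0 hi1
    have hi : i = 0 ∨ i = 1 ∨ i = 2 :=
      (by decide : ∀ i : ZMod 5, i ≠ 3 → i ≠ 3 + 1 → i = 0 ∨ i = 1 ∨ i = 2) i hi0 hi1
    rcases hi with rfl | rfl | rfl
    · rw [fv0]; exact ⟨dv3w1, fun h => n13 h.symm⟩
    · rw [fv1]; exact ⟨dv3w2, fun h => n23 h.symm⟩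
    · rw [fv2]; exact ⟨dv3w3, fun h => n33 h.symm⟩
  obtain ⟨z2, hz2c, hz2a, hz2r⟩ := ext_apply hext (v 1) (v 3) (fv (w 1) (w 2) (w 3) (w 4) z) 3
    hwheel2 h0s2 h1s2 (h1.rne 3 1 (by decide)) nv31 hrest2
  have hz2w1 : G.Adj z2 (w 1) := by have t := hz2r 0; rwa [fv0] at t
  have hz2w2 : G.Adj z2 (w 2) := by have t := hz2r 1; rwa [fv1] at t
  have hz2w3 : G.Adj z2 (w 3) := by have t := hz2r 2; rwa [fv2] at t
  have hz2w4 : G.Adj z2 (w 4) := by have t := hz2r 3; rwa [fv3] at t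
  -- extensions
  have hz2w5 : G.Adj z2 (w 5) :=
    quad h5 hz2c (c2w 5) (c1v 3) hz2a.symm
      (neq_of hz2w2 (fun h => nw25 h.symm)) (h1.rne 1 3 (by decide)) nv13
  have hz2v0 : G.Adj z2 (v 0) :=
    quad h5 hz2w1 (by rw [heq0]; exact ew01.symm) (c1v 0).symm hz2w5.symm
      (neq_of hz2w3 (by rw [heq0]; exact fun h => nw30 h.symm))
      (h2.rne 1 5 (by decide)) nw15
  have hz2v4 : G.Adj z2 (v 4) :=
    quad h5 hz2a ev34 ev40 hz2v0.symm
      (neq_of hz2w1 (fun h => n14 h.symm)) (h1.rne 3 0 (by decide)) nv30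
  refine ⟨z2, fun i => ?_, fun i => ?_⟩
  · rcases cases5 i with rfl|rfl|rfl|rfl|rfl
    · exact hz2v0
    · exact hz2c
    · rw [heq2]; exact hz2w4
    · exact hz2a
    · exact hz2v4
  · rcases cases6 i with rfl|rfl|rfl|rfl|rfl|rfl
    · rw [← heq0]; exact hz2v0
    · exact hz2w1
    · exact hz2w2
    · exact hz2w3
    · exact hz2w4
    · exact hz2w5

end Cases3
/-- Every locally weakly systolic complex (flag, 5-large, satisfying the
extended-5-wheel condition) is 7-located and locally 5-large. -/
theorem locally_weakly_systolic_seven_located {V : Type*} (G : SimpleGraph V)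
    (h5 : FiveLarge G) (hext : ExtFiveWheelCond G) :
    MLocated G 7 ∧ LocallyFiveLarge G := by
  constructor
  · intro k l hk hl v w h1 h2 heq hcase
    have hsum : k + l ≤ 11 := by
      rcases hcase with ⟨_, hb⟩ | ⟨_, _, hb⟩ <;> omega
    have hk' : k = 4 ∨ k = 5 ∨ k = 6 ∨ k = 7 := by omega
    have hl' : l = 4 ∨ l = 5 ∨ l = 6 ∨ l = 7 := by omega
    rcases hk' with rfl | rfl | rfl | rfl
    · exact (no_full_4wheel h5 h1).elim
    · rcases hl' with rfl | rfl | rfl | rfl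
      · exact (no_full_4wheel h5 h2).elim
      · -- (5,5)
        rw [show (-1 : ZMod 5) = 4 by decide] at h1
        rw [show (-2 : ZMod 5) = 3 by decide] at heq
        rcases hcase with ⟨he, _⟩ | ⟨hne0, hadj0, _⟩
        · exact case55p h5 hext v w h1 h2 heq he
        · exact case55n h5 hext v w h1 h2 heq hne0 hadj0
      · -- (5,6)
        rcases hcase with ⟨he, _⟩ | ⟨_, _, hb⟩
        · rw [show (-1 : ZMod 6) = 5 by decide] at h1
          rw [show (-2 : ZMod 6) = 4 by decide] at heq
          exact case56 h5 hext v w h1 h2 heq he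
        · exact absurd hb (by omega)
      · exact absurd hsum (by omega)
    · rcases hl' with rfl | rfl | rfl | rfl
      · exact (no_full_4wheel h5 h2).elim
      · -- (6,5)
        rcases hcase with ⟨he, _⟩ | ⟨_, _, hb⟩
        · have H1 : IsFullWheel G (v (-5 : ZMod 6)) (fun i : ZMod 5 => w (-i)) := by
            have t := h2.negr
            rwa [show (1 : ZMod 6) = -5 by decide] at t
          have H2 : IsFullWheel G (w (-1 : ZMod 5)) (fun j : ZMod 6 => v (-j)) := h1.negr
          have HEQ2 : (fun i : ZMod 5 => w (-i)) 2 = (fun j : ZMod 6 => v (-j)) 4 := by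
            show w (-2) = v (-4)
            rw [show (-4 : ZMod 6) = 2 by decide]
            exact heq.symm
          have HEQ0 : (fun i : ZMod 5 => w (-i)) 0 = (fun j : ZMod 6 => v (-j)) 0 := by
            show w (-0) = v (-0)
            rw [neg_zero, neg_zero]
            exact he.symm
          obtain ⟨z, hz1, hz2⟩ := case56 h5 hext (fun i : ZMod 5 => w (-i))
            (fun j : ZMod 6 => v (-j)) H1 H2 HEQ2 HEQ0
          refine ⟨z, fun i => ?_, fun i => ?_⟩
          · have t := hz2 (-i)
            simpa using t
          · have t := hz1 (-i)
            simpa using t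
        · exact absurd hb (by omega)
      · exact absurd hsum (by omega)
      · exact absurd hsum (by omega)
    · rcases hl' with rfl | rfl | rfl | rfl
      · exact (no_full_4wheel h5 h2).elim
      · exact absurd hsum (by omega)
      · exact absurd hsum (by omega)
      · exact absurd hsum (by omega)
  · intro z a b c d _ _ _ _ hac hbd e1 e2 e3 e4
    exact h5 a b c d hac hbd e1 e2 e3 e4
end

section
/- In a 7-located simplicial disc, any two distinct wheels W_1, W_2 with boundary lengths both less than 6 intersect only along their boundaries: W_1 ∩ W_2 ⊆ ∂W_1 ∩ ∂W_2. -/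
open Geometry

/-- Points of the Euclidean plane, in which triangulated discs are realized. -/
abbrev Pt := EuclideanSpace ℝ (Fin 2)

noncomputable instance : DecidableEq Pt := Classical.decEq _

/-- The 1-skeleton graph of a simplicial complex. -/
def skel (K : SimplicialComplex ℝ Pt) : SimpleGraph Pt where
  Adj u v := u ≠ v ∧ ({u, v} : Finset Pt) ∈ K.faces
  symm := ⟨fun u v ⟨h, hf⟩ => ⟨h.symm, by rwa [Finset.pair_comm]⟩⟩
  loopless := ⟨fun u ⟨h, _⟩ => h rfl⟩

/-- A triangulated disc: a finite simplicial complex in the plane whose underlying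
space is the closed unit disc, which is pure of dimension 2. -/
def IsTriangulatedDisc (K : SimplicialComplex ℝ Pt) : Prop :=
  K.faces.Finite ∧ K.space = Metric.closedBall (0 : Pt) 1 ∧
  (∀ s ∈ K.faces, s.card ≤ 3) ∧
  ∀ s ∈ K.faces, ∃ t ∈ K.faces, s ⊆ t ∧ t.card = 3

/-- A vertex of the disc not lying on the boundary circle. -/
def IsInteriorVertex (K : SimplicialComplex ℝ Pt) (v : Pt) : Prop :=
  v ∈ K.vertices ∧ v ∈ Metric.ball (0 : Pt) 1

/-- The degree of a vertex: the number of edges containing it. -/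
noncomputable def vdeg (K : SimplicialComplex ℝ Pt) (v : Pt) : ℕ :=
  {s ∈ K.faces | s.card = 2 ∧ v ∈ s}.ncard

/-- Flagness: every nonempty finite set of pairwise adjacent vertices spans a face. -/
def IsFlag (K : SimplicialComplex ℝ Pt) : Prop :=
  ∀ s : Finset Pt, s.Nonempty → ↑s ⊆ K.vertices →
    (↑s : Set Pt).Pairwise (skel K).Adj → s ∈ K.faces

/-- The number of triangles of the complex. -/
noncomputable def numTri (K : SimplicialComplex ℝ Pt) : ℕ :=
  {s ∈ K.faces | s.card = 3}.ncard

/-- The number of boundary edges (edges on the boundary circle). -/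
noncomputable def bdryLen (K : SimplicialComplex ℝ Pt) : ℕ :=
  {s ∈ K.faces | s.card = 2 ∧ ↑s ⊆ Metric.sphere (0 : Pt) 1}.ncard



open Real

noncomputable def fC : Pt ≃ₗ[ℝ] ℂ :=
  LinearEquiv.ofFinrankEq _ _ (by simp [Complex.finrank_real_complex])

lemma fC_inj {x y : Pt} (h : fC x = fC y) : x = y := fC.injective h

lemma fC_ne_zero {x : Pt} (h : x ≠ 0) : fC x ≠ 0 := by
  intro h0; exact h (by simpa using fC.map_eq_zero_iff.mp h0)

open Complex in
lemma sin_identity (α φ : ℝ) : (Real.sin α : ℂ) * Complex.exp (φ * I) =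
    (Real.sin (α - φ) : ℂ) + (Real.sin φ : ℂ) * Complex.exp (α * I) := by
  apply Complex.ext
  · simp only [Complex.mul_re, Complex.mul_im, Complex.add_re, Complex.add_im,
        Complex.ofReal_re, Complex.ofReal_im, Complex.exp_ofReal_mul_I_re,
        Complex.exp_ofReal_mul_I_im, Real.sin_sub]
    ring
  · simp only [Complex.mul_re, Complex.mul_im, Complex.add_re, Complex.add_im,
        Complex.ofReal_re, Complex.ofReal_im, Complex.exp_ofReal_mul_I_re,
        Complex.exp_ofReal_mul_I_im]
    ring

open Complex in
lemma sector_decomp {a b : ℂ} (ha : a ≠ 0) (hb : b ≠ 0) (him : 0 < (b / a).im)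
    {φ : ℝ} (h0 : 0 ≤ φ) (h1 : φ ≤ (b / a).arg) :
    ∃ s t : ℝ, 0 ≤ s ∧ 0 ≤ t ∧ a * Complex.exp (φ * I) = s * a + t * b ∧
      (0 < φ → φ < (b / a).arg → 0 < s ∧ 0 < t) := by
  have hw : b / a ≠ 0 := div_ne_zero hb ha
  have hαpos : 0 < (b / a).arg := by
    rcases lt_or_eq_of_le (Complex.arg_nonneg_iff.mpr him.le) with h | h
    · exact h
    · exfalso; have := Complex.arg_eq_zero_iff.mp h.symm; exact him.ne' this.2
  have hαlt : (b / a).arg < π := by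
    rcases lt_or_eq_of_le (Complex.arg_le_pi (b / a)) with h | h
    · exact h
    · exfalso; exact him.ne' (Complex.arg_eq_pi_iff.mp h).2
  set α := (b / a).arg with hadef
  have hsinα : 0 < Real.sin α := Real.sin_pos_of_pos_of_lt_pi hαpos hαlt
  have hid := sin_identity α φ
  have hbw : b = (b / a) * a := by field_simp
  have habs : (‖b / a‖ : ℂ) ≠ 0 := by simpa using norm_ne_zero_iff.mpr hw
  have hsc : (Real.sin α : ℂ) ≠ 0 := by exact_mod_cast hsinα.ne'
  have hexpα : (‖b / a‖ : ℂ) * Complex.exp (α * I) = b / a :=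
    Complex.norm_mul_exp_arg_mul_I (b / a)
  refine ⟨Real.sin (α - φ) / Real.sin α,
      Real.sin φ / (Real.sin α * ‖b / a‖), ?_, ?_, ?_, ?_⟩
  · apply div_nonneg _ hsinα.le
    exact Real.sin_nonneg_of_nonneg_of_le_pi (by linarith) (by linarith)
  · apply div_nonneg _ (by positivity)
    exact Real.sin_nonneg_of_nonneg_of_le_pi h0 (by linarith)
  · rw [Complex.ofReal_div, Complex.ofReal_div, Complex.ofReal_mul]
    have key : ((Real.sin α : ℂ) * (‖b / a‖ : ℂ)) * (a * Complex.exp (φ * I)) =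
        (‖b / a‖ : ℂ) * (Real.sin (α - φ) : ℂ) * a + (Real.sin φ : ℂ) * b := by
      linear_combination ((‖b / a‖ : ℂ) * a) * hid +
        ((Real.sin φ : ℂ) * a) * hexpα - (Real.sin φ : ℂ) * hbw
    rw [div_mul_eq_mul_div, div_mul_eq_mul_div,
      div_add_div _ _ hsc (mul_ne_zero hsc habs),
      eq_div_iff (mul_ne_zero hsc (mul_ne_zero hsc habs))]
    linear_combination (Real.sin α : ℂ) * key
  · intro hφ0 hφα
    constructor
    · apply div_pos _ hsinα
      exact Real.sin_pos_of_pos_of_lt_pi (by linarith) (by linarith)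
    · exact div_pos (Real.sin_pos_of_pos_of_lt_pi hφ0 (by linarith))
        (mul_pos hsinα (norm_pos_iff.mpr hw))

-- convex hull membership helpers
lemma mem_hull_tri {c a b p : Pt} {s t : ℝ} (hs : 0 ≤ s) (ht : 0 ≤ t) (hst : s + t ≤ 1)
    (hp : p = c + s • (a - c) + t • (b - c)) :
    p ∈ convexHull ℝ ({c, a, b} : Set Pt) := by
  have hc : c ∈ convexHull ℝ ({c, a, b} : Set Pt) :=
    subset_convexHull ℝ _ (by simp)
  have ha : a ∈ convexHull ℝ ({c, a, b} : Set Pt) :=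
    subset_convexHull ℝ _ (by simp)
  have hb : b ∈ convexHull ℝ ({c, a, b} : Set Pt) :=
    subset_convexHull ℝ _ (by simp)
  have hcv : Convex ℝ (convexHull ℝ ({c, a, b} : Set Pt)) := convex_convexHull ℝ _
  rcases eq_or_lt_of_le (add_nonneg hs ht) with h0 | h0
  · have hs0 : s = 0 := by linarith
    have ht0 : t = 0 := by linarith
    rw [hp, hs0, ht0]; simpa using hc
  · set u := s + t with hu
    have hm : (s / u) • a + (t / u) • b ∈ convexHull ℝ ({c, a, b} : Set Pt) :=
      hcv ha hb (by positivity) (by positivity) (by field_simp; exact hu.symm)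
    have := hcv hc hm (by linarith : (0:ℝ) ≤ 1 - u) h0.le (by ring)
    convert this using 1
    rw [hp]
    rw [smul_add, smul_smul, smul_smul]
    field_simp
    module
lemma mem_hull_seg {c y p : Pt} {e : ℝ} (h0 : 0 ≤ e) (h1 : e ≤ 1)
    (hp : p = c + e • (y - c)) : p ∈ convexHull ℝ ({c, y} : Set Pt) := by
  rw [convexHull_pair, segment_eq_image']
  exact ⟨e, ⟨h0, h1⟩, hp.symm⟩

-- master intersection lemma
lemma master (K : SimplicialComplex ℝ Pt) {s t : Finset Pt} (hs : s ∈ K.faces)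
    (ht : t ∈ K.faces) {c x p : Pt}
    (hsub : (↑s ∩ ↑t : Set Pt) ⊆ {c, x})
    (hps : p ∈ convexHull ℝ (s : Set Pt)) (hpt : p ∈ convexHull ℝ (t : Set Pt)) :
    ∃ lam : ℝ, p = c + lam • (x - c) := by
  have h1 := K.inter_subset_convexHull hs ht ⟨hps, hpt⟩
  have h2 : p ∈ convexHull ℝ ({c, x} : Set Pt) := convexHull_mono hsub h1
  rw [convexHull_pair, segment_eq_image'] at h2
  obtain ⟨lam, _, h⟩ := h2
  exact ⟨lam, h.symm⟩

lemma not_collinear_face (K : SimplicialComplex ℝ Pt) {x y w : Pt}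
    (hface : ({x, y, w} : Finset Pt) ∈ K.faces)
    (hxy : x ≠ y) (hxw : x ≠ w) (hyw : y ≠ w) :
    ¬ Collinear ℝ ({x, y, w} : Set Pt) := by
  have hind := K.indep hface
  have hx : x ∈ ({x, y, w} : Finset Pt) := by simp
  have hy : y ∈ ({x, y, w} : Finset Pt) := by simp
  have hw : w ∈ ({x, y, w} : Finset Pt) := by simp
  have h3 : AffineIndependent ℝ ![x, y, w] := by
    have hg : AffineIndependent ℝ
        (((↑) : ({x, y, w} : Finset Pt) → Pt) ∘
          (fun i : Fin 3 => (⟨![x, y, w] i, by fin_cases i <;> simp⟩ :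
            ({x, y, w} : Finset Pt)))) := by
      apply hind.comp_embedding ⟨_, ?_⟩
      intro i j hij
      fin_cases i <;> fin_cases j <;> simp_all [Subtype.ext_iff] <;>
        first | rfl | exact absurd hij.symm (by assumption) | exact absurd hij (by assumption)
    exact hg
  rw [affineIndependent_iff_not_collinear_set] at h3
  exact h3

lemma collinear_triple {x y w : Pt} {mu : ℝ} (h : w - x = mu • (y - x)) :
    Collinear ℝ ({x, y, w} : Set Pt) := by
  rw [collinear_iff_of_mem (Set.mem_insert x _)]
  refine ⟨y - x, ?_⟩
  rintro p (rfl | rfl | rfl)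
  · exact ⟨0, by simp⟩
  · exact ⟨1, by simp⟩
  · exact ⟨mu, by rw [← h]; simp⟩

lemma exists_cross (θ : ℕ → ℝ) (x : ℝ) :
    ∀ k : ℕ, θ 0 ≤ x → x < θ k → ∃ n < k, θ n ≤ x ∧ x < θ (n + 1) := by
  intro k
  induction k with
  | zero => intro h1 h2; exact absurd (h1.trans_lt h2) (lt_irrefl _)
  | succ m ih =>
    intro h1 h2
    by_cases hm : x < θ m
    · obtain ⟨n, hn, h⟩ := ih h1 hm
      exact ⟨n, by omega, h⟩
    · exact ⟨m, by omega, le_of_not_gt hm, h2⟩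

lemma arg_bounds {w : ℂ} (him : 0 < w.im) : 0 < w.arg ∧ w.arg < π := by
  constructor
  · rcases lt_or_eq_of_le (Complex.arg_nonneg_iff.mpr him.le) with h | h
    · exact h
    · exfalso; exact him.ne' (Complex.arg_eq_zero_iff.mp h.symm).2
  · rcases lt_or_eq_of_le (Complex.arg_le_pi w) with h | h
    · exact h
    · exfalso; exact him.ne' (Complex.arg_eq_pi_iff.mp h).2

open Complex in
lemma link_cover_aux (K : SimplicialComplex ℝ Pt) {k : ℕ} (hk : 4 ≤ k)
    (c : Pt) (r : ZMod k → Pt) (hinj : Function.Injective r) (hc : ∀ i, c ≠ r i)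
    (hf : ∀ i, ({c, r i, r (i + 1)} : Finset Pt) ∈ K.faces)
    (him : ∀ i : ZMod k, 0 < (fC (r (i + 1) - c) / fC (r i - c)).im) :
    ∀ ζ : ℂ, ζ ≠ 0 → ∃ (i : ZMod k) (s t : ℝ), 0 ≤ s ∧ 0 ≤ t ∧
      ζ = s * fC (r i - c) + t * fC (r (i + 1) - c) := by
  have hzne : ∀ i : ZMod k, fC (r i - c) ≠ 0 :=
    fun i => fC_ne_zero (sub_ne_zero.mpr (Ne.symm (hc i)))
  have hedge : ∀ i : ZMod k, ({c, r i} : Finset Pt) ∈ K.faces := fun i =>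
    K.down_closed (hf i) (by intro x hx; simp at hx ⊢; tauto) (by simp)
  set Z : ℕ → ℂ := fun n => fC (r ((n : ℕ) : ZMod k) - c) with hZdef
  have hcast : ∀ n : ℕ, Z (n + 1) = fC (r (((n : ℕ) : ZMod k) + 1) - c) := by
    intro n; rw [hZdef]; push_cast; ring_nf
  have hZ0 : ∀ n : ℕ, Z n ≠ 0 := fun n => hzne _
  have him' : ∀ n : ℕ, 0 < (Z (n + 1) / Z n).im := by
    intro n; rw [hcast n]; exact him _
  set α : ℕ → ℝ := fun n => (Z (n + 1) / Z n).arg with hαdef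
  have hα : ∀ n, 0 < α n ∧ α n < π := fun n => arg_bounds (him' n)
  set θ : ℕ → ℝ := fun n => ∑ m ∈ Finset.range n, α m with hθdef
  set T : ℕ → ℝ := fun n => ∏ m ∈ Finset.range n, ‖Z (m + 1) / Z m‖ with hTdef
  have hθ0 : θ 0 = 0 := by simp [hθdef]
  have hθs : ∀ n, θ (n + 1) = θ n + α n := by
    intro n; simp [hθdef, Finset.sum_range_succ]
  have hTs : ∀ n, T (n + 1) = T n * ‖Z (n + 1) / Z n‖ := by
    intro n; simp only [hTdef]; rw [Finset.prod_range_succ]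
  have hT : ∀ n, 0 < T n := by
    intro n; rw [hTdef]
    apply Finset.prod_pos
    intro m _
    exact norm_pos_iff.mpr (div_ne_zero (hZ0 (m + 1)) (hZ0 m))
  have hθmono : StrictMono θ := strictMono_nat_of_lt_succ (by
    intro n; rw [hθs n]; linarith [(hα n).1])
  have key : ∀ n, Z n = (T n : ℂ) * Z 0 * Complex.exp ((θ n : ℝ) * I) := by
    intro n
    induction n with
    | zero => simp [hθ0, hTdef]
    | succ n ih =>
      have hu := Complex.norm_mul_exp_arg_mul_I (Z (n + 1) / Z n)
      calc Z (n + 1) = Z (n + 1) / Z n * Z n := (div_mul_cancel₀ _ (hZ0 n)).symm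
        _ = ((‖Z (n + 1) / Z n‖ : ℂ) * Complex.exp ((α n : ℝ) * I)) * Z n := by
            simp only [hαdef]; rw [hu]
        _ = ((‖Z (n + 1) / Z n‖ : ℂ) * Complex.exp ((α n : ℝ) * I)) *
            ((T n : ℂ) * Z 0 * Complex.exp ((θ n : ℝ) * I)) := by rw [← ih]
        _ = ((T n * ‖Z (n + 1) / Z n‖ : ℝ) : ℂ) * Z 0 *
            Complex.exp ((θ n + α n : ℝ) * I) := by
            rw [show ((θ n + α n : ℝ) : ℂ) * I = (θ n : ℝ) * I + (α n : ℝ) * I by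
              push_cast; ring, Complex.exp_add]
            push_cast; ring
        _ = (T (n + 1) : ℂ) * Z 0 * Complex.exp ((θ (n + 1) : ℝ) * I) := by
            rw [hTs n, hθs n]
  -- winding number
  have hZk : Z k = Z 0 := by rw [hZdef]; simp [ZMod.natCast_self]
  have hTk1 : (T k : ℂ) * Complex.exp ((θ k : ℝ) * I) = 1 := by
    have h1 := key k
    rw [hZk] at h1
    have h2 : Z 0 * ((T k : ℂ) * Complex.exp ((θ k : ℝ) * I)) = Z 0 * 1 := by
      linear_combination -h1
    exact mul_left_cancel₀ (hZ0 0) h2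
  have hTk : T k = 1 := by
    have := congrArg (norm : ℂ → ℝ) hTk1
    rwa [norm_mul, Complex.norm_exp_ofReal_mul_I, mul_one, Complex.norm_real, Real.norm_eq_abs,
      abs_of_pos (hT k), norm_one] at this
  have hexpk : Complex.exp ((θ k : ℝ) * I) = 1 := by
    rw [hTk] at hTk1; simpa using hTk1
  obtain ⟨m, hm⟩ := Complex.exp_eq_one_iff.mp hexpk
  have hθk : θ k = m * (2 * π) := by
    have : ((θ k : ℝ) : ℂ) = (m : ℂ) * (2 * π) := by
      apply mul_right_cancel₀ Complex.I_ne_zero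
      rw [hm]; ring
    exact_mod_cast this
  have hθkpos : 0 < θ k := by
    have := hθmono (show 0 < k by omega)
    rwa [hθ0] at this
  have hmpos : 1 ≤ m := by
    by_contra hm1
    push_neg at hm1
    have : (m : ℝ) ≤ 0 := by exact_mod_cast Int.lt_add_one_iff.mp hm1
    nlinarith [pi_pos]
  -- rule out winding ≥ 2
  have hwind : θ k = 2 * π := by
    rcases eq_or_lt_of_le hmpos with h1 | h2
    · rw [hθk, ← h1]; push_cast; ring
    · exfalso
      have h4π : 4 * π ≤ θ k := by
        rw [hθk]
        have : (2 : ℝ) ≤ (m : ℝ) := by exact_mod_cast h2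
        nlinarith [pi_pos]
      obtain ⟨n, hnk, hn1, hn2⟩ := exists_cross θ (2 * π) k
        (by rw [hθ0]; positivity) (by linarith [pi_pos])
      have hn0 : 1 ≤ n := by
        rcases Nat.eq_zero_or_pos n with h | h
        · exfalso; subst h
          have := hθs 0
          rw [hθ0] at this
          have := (hα 0).2
          linarith
        · exact h
      have hnk2 : n + 1 < k := by
        rcases lt_or_ge (n + 1) k with h | h
        · exact h
        · exfalso
          have hnk' : n + 1 = k := by omega
          have := hθs n
          rw [hnk'] at this
          have := (hα n).2
          linarith
      -- sector decomposition at angle 2π - θ n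
      have hφ0 : (0 : ℝ) ≤ 2 * π - θ n := by linarith
      have hφα : 2 * π - θ n ≤ α n := by
        have := hθs n; linarith
      obtain ⟨s, t, hs, ht, heq, -⟩ :=
        sector_decomp (hZ0 n) (hZ0 (n + 1)) (him' n) hφ0 hφα
      have hsp : Complex.exp (((2 * π - θ n : ℝ)) * I) * Complex.exp ((θ n : ℝ) * I) = 1 := by
        rw [← Complex.exp_add, show ((2 * π - θ n : ℝ) : ℂ) * I + ((θ n : ℝ) : ℂ) * I
          = 2 * ↑π * I by push_cast; ring]
        exact Complex.exp_two_pi_mul_I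
      have hcalc : Z n * Complex.exp (((2 * π - θ n : ℝ)) * I) = (T n : ℂ) * Z 0 := by
        linear_combination Complex.exp (((2 * π - θ n : ℝ)) * I) * key n +
          ((T n : ℝ) : ℂ) * Z 0 * hsp
      have htZ : (T n : ℂ) * Z 0 = s * Z n + t * Z (n + 1) := by
        rw [← hcalc]; exact heq
      -- transfer to Pt
      have hTn0 : ((T n : ℝ) : ℂ) ≠ 0 := by exact_mod_cast (hT n).ne'
      have hPt : r ((0 : ℕ) : ZMod k) - c = (s / T n) • (r ((n : ℕ) : ZMod k) - c)
          + (t / T n) • (r (((n : ℕ) : ZMod k) + 1) - c) := by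
        apply fC_inj
        rw [map_add, map_smul, map_smul]
        rw [Complex.real_smul, Complex.real_smul, Complex.ofReal_div, Complex.ofReal_div]
        rw [div_mul_eq_mul_div, div_mul_eq_mul_div, ← add_div, eq_div_iff hTn0]
        have e1 : fC (r ((n : ℕ) : ZMod k) - c) = Z n := rfl
        have e2 : fC (r (((n : ℕ) : ZMod k) + 1) - c) = Z (n + 1) := (hcast n).symm
        have e0 : fC (r ((0 : ℕ) : ZMod k) - c) = Z 0 := rfl
        rw [e1, e2, e0]
        linear_combination htZ
      set s' := s / T n with hs'def
      set t' := t / T n with ht'def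
      have hs' : 0 ≤ s' := div_nonneg hs (hT n).le
      have ht' : 0 ≤ t' := div_nonneg ht (hT n).le
      set ε := 1 / (1 + s' + t') with hεdef
      have hd : (0 : ℝ) < 1 + s' + t' := by linarith
      have hε0 : 0 < ε := by positivity
      have hε1 : ε ≤ 1 := by rw [hεdef]; rw [div_le_one hd]; linarith
      set p := c + ε • (r ((0 : ℕ) : ZMod k) - c) with hpdef
      have hp1 : p ∈ convexHull ℝ ({c, r ((0 : ℕ) : ZMod k)} : Set Pt) :=
        mem_hull_seg hε0.le hε1 hpdef
      have hp2 : p ∈ convexHull ℝ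
          ({c, r ((n : ℕ) : ZMod k), r (((n : ℕ) : ZMod k) + 1)} : Set Pt) := by
        apply mem_hull_tri (s := ε * s') (t := ε * t') (by positivity) (by positivity)
          (by rw [hεdef]; rw [div_mul_eq_mul_div, div_mul_eq_mul_div, ← add_div,
            div_le_one hd]; linarith)
        rw [hpdef, hPt]
        module
      -- index distinctness
      have hiz : ((n : ℕ) : ZMod k) ≠ ((0 : ℕ) : ZMod k) := by
        simp only [Nat.cast_zero]
        rw [Ne, ZMod.natCast_eq_zero_iff]
        intro hd
        have := Nat.le_of_dvd (by omega) hd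
        omega
      have hiz1 : ((n : ℕ) : ZMod k) + 1 ≠ ((0 : ℕ) : ZMod k) := by
        simp only [Nat.cast_zero]
        rw [show ((n : ℕ) : ZMod k) + 1 = (((n + 1 : ℕ)) : ZMod k) by push_cast; ring]
        rw [Ne, ZMod.natCast_eq_zero_iff]
        intro hd
        have := Nat.le_of_dvd (by omega) hd
        omega
      have hr0n : r ((0 : ℕ) : ZMod k) ≠ r ((n : ℕ) : ZMod k) := fun h => hiz (hinj h.symm)
      have hr0n1 : r ((0 : ℕ) : ZMod k) ≠ r (((n : ℕ) : ZMod k) + 1) :=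
        fun h => hiz1 (hinj h.symm)
      have hp1' : p ∈ convexHull ℝ ((({c, r ((0 : ℕ) : ZMod k)} : Finset Pt)) : Set Pt) := by
        rw [Finset.coe_insert, Finset.coe_singleton]; exact hp1
      have hp2' : p ∈ convexHull ℝ
          ((({c, r ((n : ℕ) : ZMod k), r (((n : ℕ) : ZMod k) + 1)} : Finset Pt)) : Set Pt) := by
        rw [Finset.coe_insert, Finset.coe_insert, Finset.coe_singleton]; exact hp2
      obtain ⟨lam, hlam⟩ := master K (hedge ((0 : ℕ) : ZMod k)) (hf ((n : ℕ) : ZMod k))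
        (c := c) (x := c) (by
          intro q hq
          simp only [Finset.coe_insert, Finset.coe_singleton, Set.mem_inter_iff,
            Set.mem_insert_iff, Set.mem_singleton_iff] at hq ⊢
          obtain ⟨h1, h2⟩ := hq
          rcases h1 with rfl | rfl
          · exact Or.inl rfl
          · exfalso
            rcases h2 with h2 | h2 | h2
            · exact hc _ h2.symm
            · exact hr0n h2
            · exact hr0n1 h2) hp1' hp2'
      rw [sub_self, smul_zero, add_zero] at hlam
      rw [hpdef] at hlam
      have h0 : r ((0 : ℕ) : ZMod k) - c = 0 := by
        rcases smul_eq_zero.mp (add_eq_left.mp hlam) with h | h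
        · exact absurd h hε0.ne'
        · exact h
      exact hc _ (sub_eq_zero.mp h0).symm
  -- coverage
  intro ζ hζ0
  set w := ζ / Z 0 with hwdef
  have hw : w ≠ 0 := div_ne_zero hζ0 (hZ0 0)
  set φ := if 0 ≤ w.arg then w.arg else w.arg + 2 * π with hφdef
  have hφ0 : 0 ≤ φ := by
    rw [hφdef]; split_ifs with h
    · exact h
    · push_neg at h; linarith [Complex.neg_pi_lt_arg w, pi_pos]
  have hφlt : φ < 2 * π := by
    rw [hφdef]; split_ifs with h
    · linarith [Complex.arg_le_pi w, pi_pos]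
    · push_neg at h; linarith
  have hφexp : Complex.exp ((φ : ℝ) * I) = Complex.exp ((w.arg : ℝ) * I) := by
    rw [hφdef]; split_ifs with h
    · rfl
    · rw [show ((w.arg + 2 * π : ℝ) : ℂ) * I = (w.arg : ℝ) * I + 2 * ↑π * I by
        push_cast; ring, Complex.exp_add, Complex.exp_two_pi_mul_I, mul_one]
  have hζeq : ζ = (‖w‖ : ℂ) * (Z 0 * Complex.exp ((φ : ℝ) * I)) := by
    rw [hφexp, show (‖w‖ : ℂ) * (Z 0 * Complex.exp ((w.arg : ℝ) * I)) =
      ((‖w‖ : ℂ) * Complex.exp (w.arg * I)) * Z 0 by ring,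
      Complex.norm_mul_exp_arg_mul_I, hwdef, div_mul_cancel₀ _ (hZ0 0)]
  obtain ⟨n, hnk, hn1, hn2⟩ := exists_cross θ φ k (by rw [hθ0]; exact hφ0)
    (by rw [hwind]; exact hφlt)
  have hφα : φ - θ n ≤ α n := by have := hθs n; linarith
  obtain ⟨s, t, hs, ht, heq, -⟩ :=
    sector_decomp (hZ0 n) (hZ0 (n + 1)) (him' n) (by linarith : (0:ℝ) ≤ φ - θ n) hφα
  have hsp2 : Complex.exp (((φ - θ n : ℝ)) * I) * Complex.exp ((θ n : ℝ) * I) =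
      Complex.exp ((φ : ℝ) * I) := by
    rw [← Complex.exp_add]
    congr 1
    push_cast; ring
  have hζn : (‖w‖ : ℂ) * (Z n * Complex.exp (((φ - θ n : ℝ)) * I)) =
      (T n : ℂ) * ζ := by
    linear_combination ((‖w‖ : ℂ) * Complex.exp (((φ - θ n : ℝ)) * I)) * key n -
      ((T n : ℝ) : ℂ) * hζeq + ((‖w‖ : ℂ) * ((T n : ℝ) : ℂ) * Z 0) * hsp2
  have hTn0 : ((T n : ℝ) : ℂ) ≠ 0 := by exact_mod_cast (hT n).ne'
  refine ⟨((n : ℕ) : ZMod k), ‖w‖ * s / T n, ‖w‖ * t / T n,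
    by positivity, by positivity, ?_⟩
  have e1 : fC (r ((n : ℕ) : ZMod k) - c) = Z n := rfl
  have e2 : fC (r (((n : ℕ) : ZMod k) + 1) - c) = Z (n + 1) := (hcast n).symm
  rw [e1, e2, Complex.ofReal_div, Complex.ofReal_div, Complex.ofReal_mul, Complex.ofReal_mul]
  rw [div_mul_eq_mul_div, div_mul_eq_mul_div, ← add_div, eq_div_iff hTn0]
  linear_combination ((‖w‖ : ℝ) : ℂ) * heq - hζn

lemma tri_comm (c a b : Pt) : ({c, a, b} : Finset Pt) = {c, b, a} := by
  rw [Finset.pair_comm]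

lemma set_tri_comm (c a b : Pt) : ({c, a, b} : Set Pt) = {c, b, a} := by
  rw [Set.pair_comm]

lemma same_side {a b : ℂ} (hab : 0 < a.im * b.im) :
    ∃ p q p' q' : ℝ, 0 < p ∧ 0 < q ∧ 0 < p' ∧ 0 < q' ∧
      (p : ℂ) + q * a = (p' : ℂ) + q' * b := by
  have hbim : b.im ≠ 0 := by rintro h; rw [h, mul_zero] at hab; exact lt_irrefl _ hab
  have hq' : 0 < a.im / b.im := by
    rcases mul_pos_iff.mp hab with ⟨h1, h2⟩ | ⟨h1, h2⟩
    · exact div_pos h1 h2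
    · exact div_pos_of_neg_of_neg h1 h2
  set x := 1 + |a.re| + (a.im / b.im) * |b.re| with hx
  refine ⟨x - a.re, 1, x - (a.im / b.im) * b.re, a.im / b.im, ?_, one_pos, ?_, hq', ?_⟩
  · have h1 : 0 ≤ (a.im / b.im) * |b.re| := mul_nonneg hq'.le (abs_nonneg _)
    have h2 := le_abs_self a.re
    rw [hx]; linarith
  · have h1 : (a.im / b.im) * b.re ≤ (a.im / b.im) * |b.re| :=
      mul_le_mul_of_nonneg_left (le_abs_self _) hq'.le
    have := abs_nonneg a.re
    nlinarith
  · apply Complex.ext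
    · simp
    · simp [hbim]
lemma zmod_one_ne_zero {k : ℕ} (hk : 4 ≤ k) : (1 : ZMod k) ≠ 0 := by
  have : ((1 : ℕ) : ZMod k) ≠ 0 := by
    rw [Ne, ZMod.natCast_eq_zero_iff]
    intro h; have := Nat.le_of_dvd one_pos h; omega
  simpa using this
lemma zmod_two_ne_zero {k : ℕ} (hk : 4 ≤ k) : (2 : ZMod k) ≠ 0 := by
  have : ((2 : ℕ) : ZMod k) ≠ 0 := by
    rw [Ne, ZMod.natCast_eq_zero_iff]
    intro h; have := Nat.le_of_dvd two_pos h; omega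
  simpa using this
lemma zmod_ne_succ {k : ℕ} (hk : 4 ≤ k) (i : ZMod k) : i ≠ i + 1 := by
  intro h
  have h3 : i + 0 = i + 1 := by rw [add_zero]; exact h
  exact zmod_one_ne_zero hk (add_left_cancel h3).symm
lemma zmod_ne_succ2 {k : ℕ} (hk : 4 ≤ k) (i : ZMod k) : i ≠ i + 1 + 1 := by
  intro h
  have h3 : i + 0 = i + (1 + 1) := by rw [add_zero, ← add_assoc]; exact h
  apply zmod_two_ne_zero hk
  rw [show (2 : ZMod k) = 1 + 1 by norm_num]
  exact (add_left_cancel h3).symm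

open Complex in
lemma link_cover (K : SimplicialComplex ℝ Pt) {k : ℕ} (hk : 4 ≤ k)
    (c : Pt) (r : ZMod k → Pt) (hinj : Function.Injective r) (hc : ∀ i, c ≠ r i)
    (hf : ∀ i, ({c, r i, r (i + 1)} : Finset Pt) ∈ K.faces) :
    ∀ ζ : ℂ, ζ ≠ 0 → ∃ (i : ZMod k) (s t : ℝ), 0 ≤ s ∧ 0 ≤ t ∧
      ζ = s * fC (r i - c) + t * fC (r (i + 1) - c) := by
  haveI : NeZero k := ⟨by omega⟩
  have hzne : ∀ i : ZMod k, fC (r i - c) ≠ 0 :=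
    fun i => fC_ne_zero (sub_ne_zero.mpr (Ne.symm (hc i)))
  set u : ZMod k → ℂ := fun i => fC (r (i + 1) - c) / fC (r i - c) with hudef
  have hu0 : ∀ i, u i ≠ 0 := fun i => div_ne_zero (hzne _) (hzne _)
  have hrne : ∀ i : ZMod k, r i ≠ r (i + 1) := fun i h =>
    zmod_ne_succ hk i (hinj h)
  have hrne2 : ∀ i : ZMod k, r i ≠ r (i + 1 + 1) := fun i h =>
    zmod_ne_succ2 hk i (hinj h)
  have hnecol : ∀ i : ZMod k, ¬ Collinear ℝ ({c, r i, r (i + 1)} : Set Pt) := by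
    intro i
    apply not_collinear_face K (hf i) (hc i) (hc (i + 1)) (hrne i)
  have him0 : ∀ i : ZMod k, (u i).im ≠ 0 := by
    intro i h
    apply hnecol i
    have hre : u i = ((u i).re : ℂ) := by
      apply Complex.ext
      · rfl
      · simpa using h
    have hdiv : fC (r (i + 1) - c) = u i * fC (r i - c) := by
      rw [hudef]
      exact (div_mul_cancel₀ _ (hzne i)).symm
    rw [hre] at hdiv
    have : r (i + 1) - c = (u i).re • (r i - c) := by
      apply fC_inj
      rw [map_smul, Complex.real_smul]
      exact hdiv
    exact collinear_triple this
  -- adjacent signs multiply positively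
  have hstep : ∀ i : ZMod k, 0 < (u i).im * (u (i + 1)).im := by
    intro i
    rcases lt_trichotomy ((u i).im * (u (i + 1)).im) 0 with hlt | heq | hgt
    · exfalso
      -- opposite signs: r i and r (i+2) strictly on the same side of line (c, r (i+1))
      set a : ℂ := fC (r i - c) / fC (r (i + 1) - c) with hadef
      have ha : a = (u i)⁻¹ := by rw [hadef, hudef]; rw [inv_div]
      have haim : a.im = -(u i).im / Complex.normSq (u i) := by
        rw [ha, Complex.inv_im]
      have hprod : 0 < a.im * (u (i + 1)).im := by
        rw [haim]
        have hn : 0 < Complex.normSq (u i) := Complex.normSq_pos.mpr (hu0 i)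
        rcases mul_neg_iff.mp hlt with ⟨h1, h2⟩ | ⟨h1, h2⟩
        · exact mul_pos_of_neg_of_neg
            (div_neg_of_neg_of_pos (neg_lt_zero.mpr h1) hn) h2
        · exact mul_pos (div_pos (neg_pos.mpr h1) hn) h2
      obtain ⟨p, q, p', q', hp, hq, hp', hq', heq2⟩ := same_side hprod
      -- multiply by fC (r (i+1) - c)
      have hmul : (p : ℂ) * fC (r (i + 1) - c) + q * fC (r i - c) =
          (p' : ℂ) * fC (r (i + 1) - c) + q' * fC (r (i + 1 + 1) - c) := by
        have h1 : a * fC (r (i + 1) - c) = fC (r i - c) :=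
          div_mul_cancel₀ _ (hzne (i + 1))
        have h2 : u (i + 1) * fC (r (i + 1) - c) = fC (r (i + 1 + 1) - c) := by
          rw [hudef]
          exact div_mul_cancel₀ _ (hzne (i + 1))
        calc (p : ℂ) * fC (r (i + 1) - c) + q * fC (r i - c)
            = ((p : ℂ) + q * a) * fC (r (i + 1) - c) := by rw [add_mul, mul_assoc, h1]
          _ = ((p' : ℂ) + q' * u (i + 1)) * fC (r (i + 1) - c) := by rw [heq2]
          _ = (p' : ℂ) * fC (r (i + 1) - c) + q' * fC (r (i + 1 + 1) - c) := by
              rw [add_mul, mul_assoc, h2]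
      have hPt : p • (r (i + 1) - c) + q • (r i - c) =
          p' • (r (i + 1) - c) + q' • (r (i + 1 + 1) - c) := by
        apply fC_inj
        rw [map_add, map_add, map_smul, map_smul, map_smul, map_smul]
        simpa only [Complex.real_smul] using hmul
      set ε := 1 / (p + q + p' + q') with hεdef
      have hd : 0 < p + q + p' + q' := by linarith
      have hε : 0 < ε := by positivity
      set X := r (i + 1) - c
      set Y := r i - c
      set W := r (i + 1 + 1) - c
      set P := c + (ε * q) • Y + (ε * p) • X with hPdef
      have hP1 : P ∈ convexHull ℝ ({c, r i, r (i + 1)} : Set Pt) := by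
        apply mem_hull_tri (s := ε * q) (t := ε * p) (by positivity) (by positivity)
          (by rw [hεdef]; rw [div_mul_eq_mul_div, div_mul_eq_mul_div, ← add_div,
            div_le_one hd]; linarith)
        rw [hPdef]
      have h5 : (ε * q) • Y + (ε * p) • X = (ε * p') • X + (ε * q') • W := by
        calc (ε * q) • Y + (ε * p) • X = ε • (p • X + q • Y) := by module
          _ = ε • (p' • X + q' • W) := by rw [hPt]
          _ = (ε * p') • X + (ε * q') • W := by module
      have hP2 : P ∈ convexHull ℝ ({c, r (i + 1), r (i + 1 + 1)} : Set Pt) := by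
        apply mem_hull_tri (s := ε * p') (t := ε * q') (by positivity) (by positivity)
          (by rw [hεdef]; rw [div_mul_eq_mul_div, div_mul_eq_mul_div, ← add_div,
            div_le_one hd]; linarith)
        rw [hPdef, add_assoc, h5, ← add_assoc]
      have hP1' : P ∈ convexHull ℝ ((({c, r i, r (i + 1)} : Finset Pt)) : Set Pt) := by
        rw [Finset.coe_insert, Finset.coe_insert, Finset.coe_singleton]; exact hP1
      have hP2' : P ∈ convexHull ℝ
          ((({c, r (i + 1), r (i + 1 + 1)} : Finset Pt)) : Set Pt) := by
        rw [Finset.coe_insert, Finset.coe_insert, Finset.coe_singleton]; exact hP2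
      obtain ⟨lam, hlam⟩ := master K (hf i) (hf (i + 1)) (c := c) (x := r (i + 1)) (by
        intro w hw
        simp only [Finset.coe_insert, Finset.coe_singleton, Set.mem_inter_iff,
          Set.mem_insert_iff, Set.mem_singleton_iff] at hw ⊢
        obtain ⟨h1, h2⟩ := hw
        rcases h1 with rfl | rfl | rfl
        · exact Or.inl rfl
        · exfalso
          rcases h2 with h2 | h2 | h2
          · exact hc i h2.symm
          · exact hrne i h2
          · exact hrne2 i h2
        · exact Or.inr rfl) hP1' hP2'
      -- derive collinearity
      rw [hPdef] at hlam
      have h7 : (ε * q) • Y + (ε * p) • X = lam • X := by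
        have h9 := hlam
        rw [add_assoc] at h9
        exact add_left_cancel h9
      have hεq : ε * q ≠ 0 := by positivity
      have hY : Y = ((lam - ε * p) / (ε * q)) • X := by
        have h9 : (ε * q) • Y = (lam - ε * p) • X := by
          rw [sub_smul, ← h7]; module
        have h10 : Y = (ε * q)⁻¹ • ((ε * q) • Y) := by
          rw [smul_smul, inv_mul_cancel₀ hεq, one_smul]
        rw [h10, h9, smul_smul, ← div_eq_inv_mul]
      apply hnecol i
      rw [show ({c, r i, r (i + 1)} : Set Pt) = {c, r (i + 1), r i} from set_tri_comm _ _ _]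
      exact collinear_triple hY
    · exact absurd heq (mul_ne_zero (him0 i) (him0 (i + 1)))
    · exact hgt
  rcases (him0 0).lt_or_gt with hneg | hpos
  · -- all ratios have negative imaginary part: reverse orientation
    have hallneg : ∀ i : ZMod k, (u i).im < 0 := by
      have hnat : ∀ n : ℕ, (u ((n : ℕ) : ZMod k)).im < 0 := by
        intro n
        induction n with
        | zero => simpa using hneg
        | succ n ih =>
          have hs := hstep ((n : ℕ) : ZMod k)
          have hlt : (u (((n : ℕ) : ZMod k) + 1)).im < 0 := by nlinarith
          rwa [show (((n + 1 : ℕ)) : ZMod k) = ((n : ℕ) : ZMod k) + 1 by push_cast; ring]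
      intro i
      have := hnat i.val
      rwa [ZMod.natCast_rightInverse i] at this
    set r' : ZMod k → Pt := fun i => r (-i) with hr'def
    have hinj' : Function.Injective r' := fun a b h => neg_injective (hinj h)
    have hc' : ∀ i, c ≠ r' i := fun i => hc (-i)
    have hf' : ∀ i, ({c, r' i, r' (i + 1)} : Finset Pt) ∈ K.faces := by
      intro i
      have h9 := hf (-(i + 1))
      rw [show -(i + 1) + 1 = -i by ring] at h9
      show ({c, r (-i), r (-(i + 1))} : Finset Pt) ∈ K.faces
      rw [tri_comm]
      exact h9
    have him' : ∀ i : ZMod k, 0 < (fC (r' (i + 1) - c) / fC (r' i - c)).im := by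
      intro i
      show 0 < (fC (r (-(i + 1)) - c) / fC (r (-i) - c)).im
      have h9 := hallneg (-(i + 1))
      have h10 : fC (r (-(i + 1)) - c) / fC (r (-i) - c) = (u (-(i + 1)))⁻¹ := by
        rw [hudef]
        simp only []
        rw [inv_div, show -(i + 1) + 1 = -i by ring]
      rw [h10, Complex.inv_im]
      have hn : 0 < Complex.normSq (u (-(i + 1))) := Complex.normSq_pos.mpr (hu0 _)
      exact div_pos (by linarith) hn
    intro ζ hζ
    obtain ⟨i, s, t, hs, ht, heq⟩ := link_cover_aux K hk c r' hinj' hc' hf' him' ζ hζ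
    refine ⟨-(i + 1), t, s, ht, hs, ?_⟩
    rw [show -(i + 1) + 1 = -i by ring]
    have heq' : ζ = s * fC (r (-i) - c) + t * fC (r (-(i + 1)) - c) := heq
    linear_combination heq'
  · have hallpos : ∀ i : ZMod k, 0 < (u i).im := by
      have hnat : ∀ n : ℕ, 0 < (u ((n : ℕ) : ZMod k)).im := by
        intro n
        induction n with
        | zero => simpa using hpos
        | succ n ih =>
          have hs := hstep ((n : ℕ) : ZMod k)
          have hlt : 0 < (u (((n : ℕ) : ZMod k) + 1)).im := by nlinarith
          rwa [show (((n + 1 : ℕ)) : ZMod k) = ((n : ℕ) : ZMod k) + 1 by push_cast; ring]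
      intro i
      have := hnat i.val
      rwa [ZMod.natCast_rightInverse i] at this
    exact link_cover_aux K hk c r hinj hc hf hallpos

lemma link_L1 (K : SimplicialComplex ℝ Pt) {k : ℕ} (hk : 4 ≤ k)
    (c : Pt) (r : ZMod k → Pt) (hinj : Function.Injective r) (hc : ∀ i, c ≠ r i)
    (hf : ∀ i, ({c, r i, r (i + 1)} : Finset Pt) ∈ K.faces) :
    ∀ y : Pt, ({c, y} : Finset Pt) ∈ K.faces → y ≠ c → ∃ i, y = r i := by
  intro y hface hyc
  by_contra hno
  push_neg at hno
  have hζ : fC (y - c) ≠ 0 := fC_ne_zero (sub_ne_zero.mpr hyc)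
  obtain ⟨i, s, t, hs, ht, heq⟩ := link_cover K hk c r hinj hc hf _ hζ
  have hPt : y - c = s • (r i - c) + t • (r (i + 1) - c) := by
    apply fC_inj
    rw [map_add, map_smul, map_smul]
    simpa only [Complex.real_smul] using heq
  set ε := 1 / (1 + s + t) with hεdef
  have hd : (0 : ℝ) < 1 + s + t := by linarith
  have hε : 0 < ε := by positivity
  have hε1 : ε ≤ 1 := by rw [hεdef, div_le_one hd]; linarith
  set p := c + ε • (y - c) with hpdef
  have hp1 : p ∈ convexHull ℝ ({c, y} : Set Pt) := mem_hull_seg hε.le hε1 hpdef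
  have hp2 : p ∈ convexHull ℝ ({c, r i, r (i + 1)} : Set Pt) := by
    apply mem_hull_tri (s := ε * s) (t := ε * t) (by positivity) (by positivity)
      (by rw [hεdef, div_mul_eq_mul_div, div_mul_eq_mul_div, ← add_div, div_le_one hd]
          linarith)
    rw [hpdef, hPt]
    module
  have hp1' : p ∈ convexHull ℝ ((({c, y} : Finset Pt)) : Set Pt) := by
    rw [Finset.coe_insert, Finset.coe_singleton]; exact hp1
  have hp2' : p ∈ convexHull ℝ ((({c, r i, r (i + 1)} : Finset Pt)) : Set Pt) := by
    rw [Finset.coe_insert, Finset.coe_insert, Finset.coe_singleton]; exact hp2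
  obtain ⟨lam, hlam⟩ := master K hface (hf i) (c := c) (x := c) (by
    intro q hq
    simp only [Finset.coe_insert, Finset.coe_singleton, Set.mem_inter_iff,
      Set.mem_insert_iff, Set.mem_singleton_iff] at hq ⊢
    obtain ⟨h1, h2⟩ := hq
    rcases h1 with rfl | rfl
    · exact Or.inl rfl
    · exfalso
      rcases h2 with h2 | h2 | h2
      · exact hyc h2
      · exact hno i h2
      · exact hno (i + 1) h2) hp1' hp2'
  rw [sub_self, smul_zero, add_zero] at hlam
  rw [hpdef] at hlam
  have h0 : y - c = 0 := by
    rcases smul_eq_zero.mp (add_eq_left.mp hlam) with h | h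
    · exact absurd h hε.ne'
    · exact h
  exact hyc (sub_eq_zero.mp h0)

lemma link_L2 (K : SimplicialComplex ℝ Pt) {k : ℕ} (hk : 4 ≤ k)
    (c : Pt) (r : ZMod k → Pt) (hinj : Function.Injective r) (hc : ∀ i, c ≠ r i)
    (hf : ∀ i, ({c, r i, r (i + 1)} : Finset Pt) ∈ K.faces) :
    ∀ a b : Pt, ({c, a, b} : Finset Pt) ∈ K.faces → a ≠ c → b ≠ c → a ≠ b →
      ∃ i, (a = r i ∧ b = r (i + 1)) ∨ (b = r i ∧ a = r (i + 1)) := by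
  intro a b hface hac hbc hab
  have hncol : ¬ Collinear ℝ ({c, a, b} : Set Pt) :=
    not_collinear_face K hface hac.symm hbc.symm hab
  have hζ : fC (a - c) + fC (b - c) ≠ 0 := by
    intro h0
    apply hncol
    have : b - c = (-1 : ℝ) • (a - c) := by
      apply fC_inj
      rw [map_smul, Complex.real_smul]
      push_cast
      linear_combination h0
    exact collinear_triple this
  obtain ⟨i, s, t, hs, ht, heq⟩ := link_cover K hk c r hinj hc hf _ hζ
  have hPt : (a - c) + (b - c) = s • (r i - c) + t • (r (i + 1) - c) := by
    apply fC_inj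
    rw [map_add, map_add, map_smul, map_smul]
    simpa only [Complex.real_smul] using heq
  set ε := 1 / (2 + s + t) with hεdef
  have hd : (0 : ℝ) < 2 + s + t := by linarith
  have hε : 0 < ε := by positivity
  set p := c + ε • ((a - c) + (b - c)) with hpdef
  have hp1 : p ∈ convexHull ℝ ({c, a, b} : Set Pt) := by
    apply mem_hull_tri (s := ε) (t := ε) hε.le hε.le
      (by rw [hεdef, ← add_div, div_le_one hd]; linarith)
    rw [hpdef]; module
  have hp2 : p ∈ convexHull ℝ ({c, r i, r (i + 1)} : Set Pt) := by
    apply mem_hull_tri (s := ε * s) (t := ε * t) (by positivity) (by positivity)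
      (by rw [hεdef, div_mul_eq_mul_div, div_mul_eq_mul_div, ← add_div, div_le_one hd]
          linarith)
    rw [hpdef, hPt]
    module
  have hp1' : p ∈ convexHull ℝ ((({c, a, b} : Finset Pt)) : Set Pt) := by
    rw [Finset.coe_insert, Finset.coe_insert, Finset.coe_singleton]; exact hp1
  have hp2' : p ∈ convexHull ℝ ((({c, r i, r (i + 1)} : Finset Pt)) : Set Pt) := by
    rw [Finset.coe_insert, Finset.coe_insert, Finset.coe_singleton]; exact hp2
  -- helper: contradiction from p lying on segment [c, a]
  have hcontraA : (∃ lam : ℝ, p = c + lam • (a - c)) → False := by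
    rintro ⟨lam, hlam⟩
    rw [hpdef] at hlam
    have h7 : ε • (b - c) = (lam - ε) • (a - c) := by
      have h8 := add_left_cancel hlam
      rw [sub_smul, ← h8]
      module
    apply hncol
    have h9 : b - c = ((lam - ε) / ε) • (a - c) := by
      have h10 : b - c = ε⁻¹ • (ε • (b - c)) := by
        rw [smul_smul, inv_mul_cancel₀ hε.ne', one_smul]
      rw [h10, h7, smul_smul, ← div_eq_inv_mul]
    exact collinear_triple h9
  have hcontraB : (∃ lam : ℝ, p = c + lam • (b - c)) → False := by
    rintro ⟨lam, hlam⟩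
    rw [hpdef] at hlam
    have h7 : ε • (a - c) = (lam - ε) • (b - c) := by
      have h8 := add_left_cancel hlam
      rw [sub_smul, ← h8]
      module
    apply hncol
    rw [set_tri_comm]
    have h9 : a - c = ((lam - ε) / ε) • (b - c) := by
      have h10 : a - c = ε⁻¹ • (ε • (a - c)) := by
        rw [smul_smul, inv_mul_cancel₀ hε.ne', one_smul]
      rw [h10, h7, smul_smul, ← div_eq_inv_mul]
    exact collinear_triple h9
  by_cases ha1 : a = r i
  · by_cases hb2 : b = r (i + 1)
    · exact ⟨i, Or.inl ⟨ha1, hb2⟩⟩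
    · exfalso
      apply hcontraA
      apply master K hface (hf i) (c := c) (x := a) ?_ hp1' hp2'
      intro q hq
      simp only [Finset.coe_insert, Finset.coe_singleton, Set.mem_inter_iff,
        Set.mem_insert_iff, Set.mem_singleton_iff] at hq ⊢
      obtain ⟨h1, h2⟩ := hq
      rcases h1 with rfl | rfl | rfl
      · exact Or.inl rfl
      · exact Or.inr rfl
      · exfalso
        rcases h2 with h2 | h2 | h2
        · exact hbc h2
        · exact hab (by rw [ha1, h2])
        · exact hb2 h2
  · by_cases ha2 : a = r (i + 1)
    · by_cases hb1 : b = r i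
      · exact ⟨i, Or.inr ⟨hb1, ha2⟩⟩
      · exfalso
        apply hcontraA
        apply master K hface (hf i) (c := c) (x := a) ?_ hp1' hp2'
        intro q hq
        simp only [Finset.coe_insert, Finset.coe_singleton, Set.mem_inter_iff,
          Set.mem_insert_iff, Set.mem_singleton_iff] at hq ⊢
        obtain ⟨h1, h2⟩ := hq
        rcases h1 with rfl | rfl | rfl
        · exact Or.inl rfl
        · exact Or.inr rfl
        · exfalso
          rcases h2 with h2 | h2 | h2
          · exact hbc h2
          · exact hb1 h2
          · exact hab (by rw [ha2, h2])
    · by_cases hb : b = r i ∨ b = r (i + 1)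
      · exfalso
        apply hcontraB
        apply master K hface (hf i) (c := c) (x := b) ?_ hp1' hp2'
        intro q hq
        simp only [Finset.coe_insert, Finset.coe_singleton, Set.mem_inter_iff,
          Set.mem_insert_iff, Set.mem_singleton_iff] at hq ⊢
        obtain ⟨h1, h2⟩ := hq
        rcases h1 with rfl | rfl | rfl
        · exact Or.inl rfl
        · exfalso
          rcases h2 with h2 | h2 | h2
          · exact hac h2
          · exact ha1 h2
          · exact ha2 h2
        · exact Or.inr rfl
      · exfalso
        push_neg at hb
        have ⟨lam, hlam⟩ : ∃ lam : ℝ, p = c + lam • (c - c) := by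
          apply master K hface (hf i) (c := c) (x := c) ?_ hp1' hp2'
          intro q hq
          simp only [Finset.coe_insert, Finset.coe_singleton, Set.mem_inter_iff,
            Set.mem_insert_iff, Set.mem_singleton_iff] at hq ⊢
          obtain ⟨h1, h2⟩ := hq
          rcases h1 with rfl | rfl | rfl
          · exact Or.inl rfl
          · exfalso
            rcases h2 with h2 | h2 | h2
            · exact hac h2
            · exact ha1 h2
            · exact ha2 h2
          · exfalso
            rcases h2 with h2 | h2 | h2
            · exact hbc h2
            · exact hb.1 h2
            · exact hb.2 h2
        rw [sub_self, smul_zero, add_zero, hpdef] at hlam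
        have h0 : (a - c) + (b - c) = 0 := by
          rcases smul_eq_zero.mp (add_eq_left.mp hlam) with h | h
          · exact absurd h hε.ne'
          · exact h
        apply hncol
        have : b - c = (-1 : ℝ) • (a - c) := by
          rw [neg_smul, one_smul, ← sub_eq_zero]
          rw [← h0]
          module
        exact collinear_triple this

lemma edge_of_tri {K : SimplicialComplex ℝ Pt} {c a b : Pt}
    (h : ({c, a, b} : Finset Pt) ∈ K.faces) : ({c, a} : Finset Pt) ∈ K.faces :=
  K.down_closed h (by intro x hx; simp at hx ⊢; tauto) (by simp)

lemma vertex_of_face {K : SimplicialComplex ℝ Pt} {f : Finset Pt} (hf : f ∈ K.faces)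
    {v : Pt} (hv : v ∈ f) : v ∈ K.vertices :=
  K.down_closed hf (Finset.singleton_subset_iff.mpr hv) (by simp)

lemma link_full (K : SimplicialComplex ℝ Pt) (hflag : IsFlag K) {k : ℕ} (hk : 4 ≤ k)
    (c : Pt) (r : ZMod k → Pt) (hinj : Function.Injective r) (hc : ∀ i, c ≠ r i)
    (hf : ∀ i, ({c, r i, r (i + 1)} : Finset Pt) ∈ K.faces) :
    ∀ s t : ZMod k, (skel K).Adj (r s) (r t) → t = s + 1 ∨ s = t + 1 := by
  intro s t hadj
  obtain ⟨hne, hedge⟩ := hadj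
  have hadjc : ∀ j : ZMod k, (skel K).Adj c (r j) := fun j =>
    ⟨hc j, edge_of_tri (hf j)⟩
  have hface : ({c, r s, r t} : Finset Pt) ∈ K.faces := by
    apply hflag
    · exact ⟨c, by simp⟩
    · intro v hv
      simp only [Finset.coe_insert, Finset.coe_singleton, Set.mem_insert_iff,
        Set.mem_singleton_iff] at hv
      rcases hv with rfl | rfl | rfl
      · exact vertex_of_face (hf s) (by simp)
      · exact vertex_of_face (hf s) (by simp)
      · exact vertex_of_face (hf t) (by simp)
    · intro x hx y hy hxy
      simp only [Finset.coe_insert, Finset.coe_singleton, Set.mem_insert_iff,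
        Set.mem_singleton_iff] at hx hy
      rcases hx with rfl | rfl | rfl <;> rcases hy with rfl | rfl | rfl <;>
        first
          | exact absurd rfl hxy
          | exact hadjc _
          | exact (hadjc _).symm
          | exact ⟨hne, hedge⟩
          | exact ⟨hne.symm, by rwa [Finset.pair_comm]⟩
  obtain ⟨i, hi⟩ := link_L2 K hk c r hinj hc hf (r s) (r t) hface
    (Ne.symm (hc s)) (Ne.symm (hc t)) hne
  rcases hi with ⟨h1, h2⟩ | ⟨h1, h2⟩
  · left; rw [hinj h1, hinj h2]
  · right; rw [hinj h1, hinj h2]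

lemma finset_rot (a b c : Pt) : ({a, b, c} : Finset Pt) = ({c, a, b} : Finset Pt) := by
  ext x; simp; tauto

lemma no_center_on_rim (K : SimplicialComplex ℝ Pt) (hflag : IsFlag K)
    (h7 : MLocated (skel K) 7) {k1 k2 : ℕ} (hk1 : 4 ≤ k1) (hk1' : k1 < 6)
    (hk2 : 4 ≤ k2) (hk2' : k2 < 6) (c1 : Pt) (r1 : ZMod k1 → Pt)
    (c2 : Pt) (r2 : ZMod k2 → Pt) (hW1 : IsWheel (skel K) c1 r1)
    (hW2 : IsWheel (skel K) c2 r2)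
    (hW1f : ∀ i, ({c1, r1 i, r1 (i + 1)} : Finset Pt) ∈ K.faces)
    (hW2f : ∀ i, ({c2, r2 i, r2 (i + 1)} : Finset Pt) ∈ K.faces)
    (j : ZMod k2) (hc1r : c1 = r2 j) : False := by
  obtain ⟨hinj1, hc1ne, hadj1, hadjc1⟩ := hW1
  obtain ⟨hinj2, hc2ne, hadj2, hadjc2⟩ := hW2
  have hfull1 := link_full K hflag hk1 c1 r1 hinj1 hc1ne hW1f
  have hfull2 := link_full K hflag hk2 c2 r2 hinj2 hc2ne hW2f
  have hc2c1 : c2 ≠ c1 := by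
    intro h; rw [hc1r] at h; exact hc2ne j h
  have hadj12 : (skel K).Adj c2 c1 := by rw [hc1r]; exact hadjc2 j
  have hedge21 : ({c1, c2} : Finset Pt) ∈ K.faces := by
    have := hadj12.2
    rwa [Finset.pair_comm] at this
  obtain ⟨i0, hi0⟩ := link_L1 K hk1 c1 r1 hinj1 hc1ne hW1f c2 hedge21 hc2c1
  -- the two triangles of wheel 2 at c1 = r2 j
  have hfaceA : ({c1, c2, r2 (j - 1)} : Finset Pt) ∈ K.faces := by
    have h := hW2f (j - 1)
    rw [show j - 1 + 1 = j by ring] at h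
    rw [← hc1r] at h
    rw [show ({c1, c2, r2 (j - 1)} : Finset Pt) = ({c2, r2 (j - 1), c1} : Finset Pt) from
      (finset_rot c2 (r2 (j - 1)) c1).symm]
    exact h
  have hfaceB : ({c1, c2, r2 (j + 1)} : Finset Pt) ∈ K.faces := by
    have h := hW2f j
    rw [← hc1r] at h
    have : ({c2, c1, r2 (j + 1)} : Finset Pt) = ({c1, c2, r2 (j + 1)} : Finset Pt) := by
      ext x; simp; tauto
    rwa [this] at h
  have hrjm1 : r2 (j - 1) ≠ c1 := by
    rw [hc1r]; intro h
    have := hinj2 h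
    apply zmod_one_ne_zero hk2
    linear_combination -this
  have hrjp1 : r2 (j + 1) ≠ c1 := by
    rw [hc1r]; intro h
    have := hinj2 h
    apply zmod_one_ne_zero hk2
    linear_combination this
  -- identify r2 (j ± 1) among r1 (i0 ± 1)
  have hA : r2 (j - 1) = r1 (i0 + 1) ∨ r2 (j - 1) = r1 (i0 - 1) := by
    obtain ⟨m, hm⟩ := link_L2 K hk1 c1 r1 hinj1 hc1ne hW1f c2 (r2 (j - 1)) hfaceA
      hc2c1 hrjm1 (hc2ne (j - 1))
    rcases hm with ⟨h1, h2⟩ | ⟨h1, h2⟩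
    · left
      have hmi : m = i0 := hinj1 (h1.symm.trans hi0)
      rw [← hmi]; exact h2
    · right
      have hmi : m + 1 = i0 := hinj1 (h2.symm.trans hi0)
      have hm2 : m = i0 - 1 := by linear_combination hmi
      rw [← hm2]; exact h1
  have hB : r2 (j + 1) = r1 (i0 + 1) ∨ r2 (j + 1) = r1 (i0 - 1) := by
    obtain ⟨m, hm⟩ := link_L2 K hk1 c1 r1 hinj1 hc1ne hW1f c2 (r2 (j + 1)) hfaceB
      hc2c1 hrjp1 (hc2ne (j + 1))
    rcases hm with ⟨h1, h2⟩ | ⟨h1, h2⟩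
    · left
      have hmi : m = i0 := hinj1 (h1.symm.trans hi0)
      rw [← hmi]; exact h2
    · right
      have hmi : m + 1 = i0 := hinj1 (h2.symm.trans hi0)
      have hm2 : m = i0 - 1 := by linear_combination hmi
      rw [← hm2]; exact h1
  have hABne : r2 (j - 1) ≠ r2 (j + 1) := by
    intro h
    have := hinj2 h
    apply zmod_two_ne_zero hk2
    linear_combination -this
  -- the w-wheel (shift of wheel 2)
  set w : ZMod k2 → Pt := fun i => r2 (j + 1 + i) with hwdef
  have hwm1 : w (-1) = c1 := by
    show r2 (j + 1 + (-1)) = c1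
    rw [show j + 1 + (-1) = j by ring, ← hc1r]
  have hwm2 : w (-2) = r2 (j - 1) := by
    show r2 (j + 1 + (-2)) = r2 (j - 1)
    rw [show j + 1 + (-2) = j - 1 by ring]
  have hw0 : w 0 = r2 (j + 1) := by
    show r2 (j + 1 + 0) = _
    rw [add_zero]
  have hWw : IsWheel (skel K) c2 w := by
    refine ⟨?_, fun i => hc2ne _, ?_, fun i => hadjc2 _⟩
    · intro a b h
      have h2 := hinj2 h
      linear_combination h2
    · intro i
      show (skel K).Adj (r2 (j + 1 + i)) (r2 (j + 1 + (i + 1)))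
      rw [show j + 1 + (i + 1) = (j + 1 + i) + 1 by ring]
      exact hadj2 _
  have hfullw : IsFullWheel (skel K) c2 w := by
    refine ⟨hWw, ?_⟩
    intro a b h
    rcases hfull2 (j + 1 + a) (j + 1 + b) h with h' | h'
    · left; linear_combination h'
    · right; linear_combination h'
  -- common final argument, given a suitable v-wheel
  have hfinal : ∀ v : ZMod k1 → Pt, IsFullWheel (skel K) c1 v →
      (∀ iz : ZMod k1, ∃ i, v i = r1 iz) →
      v 1 = c2 → v 2 = w (-2) → v 0 = w 0 → False := by
    intro v hfullv hsurj hv1 hv2 hv0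
    obtain ⟨z, hzv, hzw⟩ := h7 k1 k2 hk1 hk2 v w (hwm1.symm ▸ hfullv)
      (hv1.symm ▸ hfullw) hv2 (Or.inl ⟨hv0, by omega⟩)
    have hzc1 : (skel K).Adj z c1 := by
      have := hzw (-1)
      rwa [hwm1] at this
    have hzedge : ({c1, z} : Finset Pt) ∈ K.faces := by
      have := hzc1.2
      rwa [Finset.pair_comm] at this
    obtain ⟨iz, hiz⟩ := link_L1 K hk1 c1 r1 hinj1 hc1ne hW1f z hzedge hzc1.1
    obtain ⟨i, hi⟩ := hsurj iz
    have hfin : (skel K).Adj z z := by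
      have h := hzv i
      rw [hi, ← hiz] at h
      exact h
    exact (skel K).irrefl hfin
  rcases hA with hA1 | hA2
  · -- forward orientation
    have hBX : r2 (j + 1) = r1 (i0 - 1) := by
      rcases hB with h | h
      · exfalso; apply hABne; rw [hA1, h]
      · exact h
    apply hfinal (fun i => r1 (i0 - 1 + i))
    · refine ⟨⟨?_, fun i => hc1ne _, ?_, fun i => hadjc1 _⟩, ?_⟩
      · intro a b h
        have h2 := hinj1 h
        linear_combination h2
      · intro i
        show (skel K).Adj (r1 (i0 - 1 + i)) (r1 (i0 - 1 + (i + 1)))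
        rw [show i0 - 1 + (i + 1) = (i0 - 1 + i) + 1 by ring]
        exact hadj1 _
      · intro a b h
        rcases hfull1 (i0 - 1 + a) (i0 - 1 + b) h with h' | h'
        · left; linear_combination h'
        · right; linear_combination h'
    · intro iz
      refine ⟨iz + 1 - i0, ?_⟩
      show r1 (i0 - 1 + (iz + 1 - i0)) = r1 iz
      rw [show i0 - 1 + (iz + 1 - i0) = iz by ring]
    · show r1 (i0 - 1 + 1) = c2
      rw [show i0 - 1 + 1 = i0 by ring, ← hi0]
    · rw [hwm2]
      show r1 (i0 - 1 + 2) = _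
      rw [show i0 - 1 + 2 = i0 + 1 by ring, ← hA1]
    · rw [hw0]
      show r1 (i0 - 1 + 0) = _
      rw [add_zero, ← hBX]
  · -- reverse orientation
    have hBY : r2 (j + 1) = r1 (i0 + 1) := by
      rcases hB with h | h
      · exact h
      · exfalso; apply hABne; rw [hA2, h]
    apply hfinal (fun i => r1 (i0 + 1 - i))
    · refine ⟨⟨?_, fun i => hc1ne _, ?_, fun i => hadjc1 _⟩, ?_⟩
      · intro a b h
        have h2 := hinj1 h
        linear_combination -h2
      · intro i
        show (skel K).Adj (r1 (i0 + 1 - i)) (r1 (i0 + 1 - (i + 1)))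
        rw [show i0 + 1 - i = (i0 + 1 - (i + 1)) + 1 by ring]
        exact (hadj1 _).symm
      · intro a b h
        rcases hfull1 (i0 + 1 - a) (i0 + 1 - b) h with h' | h'
        · right; linear_combination h'
        · left; linear_combination h'
    · intro iz
      refine ⟨i0 + 1 - iz, ?_⟩
      show r1 (i0 + 1 - (i0 + 1 - iz)) = r1 iz
      rw [show i0 + 1 - (i0 + 1 - iz) = iz by ring]
    · show r1 (i0 + 1 - 1) = c2
      rw [show i0 + 1 - 1 = i0 by ring, ← hi0]
    · rw [hwm2]
      show r1 (i0 + 1 - 2) = _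
      rw [show i0 + 1 - 2 = i0 - 1 by ring, ← hA2]
    · rw [hw0]
      show r1 (i0 + 1 - 0) = _
      rw [show i0 + 1 - 0 = i0 + 1 by ring, ← hBY]

/-- In a 7-located simplicial disc, distinct wheels of boundary length
less than 6 intersect only along their boundaries (rims). -/
theorem small_wheels_meet_along_boundaries (K : Geometry.SimplicialComplex ℝ Pt)
    (hD : IsTriangulatedDisc K) (hflag : IsFlag K) (h7 : MLocated (skel K) 7)
    {k1 k2 : ℕ} (hk1 : 4 ≤ k1) (hk1' : k1 < 6) (hk2 : 4 ≤ k2) (hk2' : k2 < 6)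
    (c1 : Pt) (r1 : ZMod k1 → Pt) (c2 : Pt) (r2 : ZMod k2 → Pt)
    (hW1 : IsWheel (skel K) c1 r1) (hW2 : IsWheel (skel K) c2 r2)
    (hW1f : ∀ i, ({c1, r1 i, r1 (i + 1)} : Finset Pt) ∈ K.faces)
    (hW2f : ∀ i, ({c2, r2 i, r2 (i + 1)} : Finset Pt) ∈ K.faces)
    (hdist : ¬ (c1 = c2 ∧ Set.range r1 = Set.range r2)) :
    ({c1} ∪ Set.range r1) ∩ ({c2} ∪ Set.range r2) ⊆ Set.range r1 ∩ Set.range r2 := by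

  have hc12 : c1 ≠ c2 := by
    intro h
    apply hdist
    refine ⟨h, ?_⟩
    ext x
    simp only [Set.mem_range]
    constructor
    · rintro ⟨i, rfl⟩
      have hadj := hW1.2.2.2 i
      rw [h] at hadj
      obtain ⟨jj, hjj⟩ := link_L1 K hk2 c2 r2 hW2.1 hW2.2.1 hW2f (r1 i) hadj.2
        (Ne.symm hadj.1)
      exact ⟨jj, hjj.symm⟩
    · rintro ⟨i, rfl⟩
      have hadj := hW2.2.2.2 i
      rw [← h] at hadj
      obtain ⟨jj, hjj⟩ := link_L1 K hk1 c1 r1 hW1.1 hW1.2.1 hW1f (r2 i) hadj.2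
        (Ne.symm hadj.1)
      exact ⟨jj, hjj.symm⟩
  rintro x ⟨hx1, hx2⟩
  rw [Set.mem_union, Set.mem_singleton_iff] at hx1 hx2
  rcases hx1 with h1 | hx1
  · rcases hx2 with h2 | hx2
    · exact absurd (h1.symm.trans h2) hc12
    · obtain ⟨jj, hjj⟩ := hx2
      exact (no_center_on_rim K hflag h7 hk1 hk1' hk2 hk2'
        c1 r1 c2 r2 hW1 hW2 hW1f hW2f jj (h1.symm.trans hjj.symm)).elim
  · rcases hx2 with h2 | hx2
    · obtain ⟨i, hi⟩ := hx1
      exact (no_center_on_rim K hflag h7 hk2 hk2' hk1 hk1'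
        c2 r2 c1 r1 hW2 hW1 hW2f hW1f i (h2.symm.trans hi.symm)).elim
    · exact ⟨hx1, hx2⟩
end
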